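/- arXiv:2001.00271 — 6 statements merged into one kernel-verified Lean document; each statement's English description precedes it below -/
import Mathlib

section
/- Let S, A, Ω be finite nonempty sets and consider a finite MDP with options with discount γ ∈ [0,1). The option Bellman operator T, acting on functions Q_U : S × Ω × A → ℝ by (T Q_U)(s,ω,a) = r(s,a) + γ Σ_{s'} P(s'|s,a) [ (1−β_ω(s')) Q_Ω(s',ω) + β_ω(s') Σ_{ω'} π_I(ω'|s') Q_Ω(s',ω') ], where Q_Ω(s,ω) = Σ_a π_ω(a|s) Q_U(s,ω,a), is a γ-contraction in the supremum norm; consequently there exists a unique pair of functions Q_U : S × Ω × A → ℝ and Q_Ω : S × Ω → ℝ satisfying the coupled Bellman equations Q_Ω(s,ω) = Σ_a π_ω(a|s) Q_U(s,ω,a) and Q_U(s,ω,a) = r(s,a) + γ Σ_{s'} P(s'|s,a) [ (1−β_ω(s')) Q_Ω(s',ω) + β_ω(s') Σ_{ω'} π_I(ω'|s') Q_Ω(s',ω') ]. -/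
private lemma convex_abs_le' {ι : Type*} [Fintype ι] (w v : ι → ℝ)
    (hw0 : ∀ i, 0 ≤ w i) (hw1 : ∑ i, w i = 1) (M : ℝ) (hv : ∀ i, |v i| ≤ M) :
    |∑ i, w i * v i| ≤ M := by
  calc |∑ i, w i * v i| ≤ ∑ i, |w i * v i| := Finset.abs_sum_le_sum_abs _ _
    _ = ∑ i, w i * |v i| := by
        refine Finset.sum_congr rfl fun i _ => ?_
        rw [abs_mul, abs_of_nonneg (hw0 i)]
    _ ≤ ∑ i, w i * M := Finset.sum_le_sum fun i _ => mul_le_mul_of_nonneg_left (hv i) (hw0 i)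
    _ = M := by rw [← Finset.sum_mul, hw1, one_mul]

/-- In a finite MDP with options (with interest policy over options `πI`
derived from an interest function `I` and a policy over options `πΩ`), the option Bellman
operator `T` is a `γ`-contraction in the supremum norm; consequently there exists a unique
pair `(Q_U, Q_Ω)` satisfying the coupled Bellman equations. -/
theorem option_bellman_operator_contraction_and_unique_fixed_point
    {S A Ω : Type*} [Fintype S] [Fintype A] [Fintype Ω]
    [Nonempty S] [Nonempty A] [Nonempty Ω]
    (r : S → A → ℝ) (P : S → A → S → ℝ)
    (hP0 : ∀ s a s', 0 ≤ P s a s') (hP1 : ∀ s a, ∑ s', P s a s' = 1)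
    (γ : ℝ) (hγ0 : 0 ≤ γ) (hγ1 : γ < 1)
    (π : Ω → S → A → ℝ)
    (hπ0 : ∀ ω s a, 0 ≤ π ω s a) (hπ1 : ∀ ω s, ∑ a, π ω s a = 1)
    (β : Ω → S → ℝ) (hβ0 : ∀ ω s, 0 ≤ β ω s) (hβ1 : ∀ ω s, β ω s ≤ 1)
    (πΩ : S → Ω → ℝ)
    (hπΩ0 : ∀ s ω, 0 ≤ πΩ s ω) (hπΩ1 : ∀ s, ∑ ω, πΩ s ω = 1)
    (I : S → Ω → ℝ) (hI0 : ∀ s ω, 0 ≤ I s ω)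
    (hIpos : ∀ s, 0 < ∑ ω, I s ω * πΩ s ω)
    (πI : S → Ω → ℝ)
    (hπI : ∀ s ω, πI s ω = I s ω * πΩ s ω / ∑ ω', I s ω' * πΩ s ω')
    (T : (S → Ω → A → ℝ) → (S → Ω → A → ℝ))
    (hT : ∀ QU : S → Ω → A → ℝ, ∀ s ω a,
      T QU s ω a = r s a + γ * ∑ s', P s a s' *
        ((1 - β ω s') * (∑ a', π ω s' a' * QU s' ω a') +
          β ω s' * ∑ ω', πI s' ω' * (∑ a', π ω' s' a' * QU s' ω' a'))) :
    (∀ Q Q' : S → Ω → A → ℝ, ‖T Q - T Q'‖ ≤ γ * ‖Q - Q'‖) ∧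
      (∃! p : (S → Ω → A → ℝ) × (S → Ω → ℝ),
        (∀ s ω, p.2 s ω = ∑ a, π ω s a * p.1 s ω a) ∧
        (∀ s ω a, p.1 s ω a = r s a + γ * ∑ s', P s a s' *
          ((1 - β ω s') * p.2 s' ω + β ω s' * ∑ ω', πI s' ω' * p.2 s' ω'))) := by
  -- πI is a probability distribution
  have hπI0 : ∀ s ω, 0 ≤ πI s ω := by
    intro s ω
    rw [hπI]
    exact div_nonneg (mul_nonneg (hI0 s ω) (hπΩ0 s ω)) (le_of_lt (hIpos s))
  have hπI1 : ∀ s, ∑ ω, πI s ω = 1 := by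
    intro s
    have := (hIpos s).ne'
    simp only [hπI]
    rw [← Finset.sum_div, div_self this]
  -- main pointwise estimate
  have key : ∀ Q Q' : S → Ω → A → ℝ, ∀ s ω a,
      |T Q s ω a - T Q' s ω a| ≤ γ * ‖Q - Q'‖ := by
    intro Q Q' s ω a
    set M := ‖Q - Q'‖ with hM
    have hDM : ∀ s ω a, |Q s ω a - Q' s ω a| ≤ M := by
      intro s ω a
      have h1 : ‖(Q - Q') s ω a‖ ≤ ‖(Q - Q') s ω‖ := norm_le_pi_norm _ a
      have h2 : ‖(Q - Q') s ω‖ ≤ ‖(Q - Q') s‖ := norm_le_pi_norm _ ω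
      have h3 : ‖(Q - Q') s‖ ≤ ‖Q - Q'‖ := norm_le_pi_norm _ s
      simpa [Real.norm_eq_abs] using h1.trans (h2.trans h3)
    have hQΩ : ∀ s' ω', |∑ a', π ω' s' a' * (Q s' ω' a' - Q' s' ω' a')| ≤ M :=
      fun s' ω' => convex_abs_le' _ _ (hπ0 ω' s') (hπ1 ω' s') M (fun a' => hDM s' ω' a')
    have hg : ∀ s', |(1 - β ω s') * (∑ a', π ω s' a' * (Q s' ω a' - Q' s' ω a')) +
        β ω s' * ∑ ω', πI s' ω' * (∑ a', π ω' s' a' * (Q s' ω' a' - Q' s' ω' a'))| ≤ M := by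
      intro s'
      have hsum : |∑ ω', πI s' ω' * (∑ a', π ω' s' a' * (Q s' ω' a' - Q' s' ω' a'))| ≤ M :=
        convex_abs_le' _ _ (hπI0 s') (hπI1 s') M (fun ω' => hQΩ s' ω')
      have hM0 : 0 ≤ M := norm_nonneg _
      calc |((1 - β ω s') * (∑ a', π ω s' a' * (Q s' ω a' - Q' s' ω a')) +
          β ω s' * ∑ ω', πI s' ω' * (∑ a', π ω' s' a' * (Q s' ω' a' - Q' s' ω' a')))|
          ≤ |(1 - β ω s') * (∑ a', π ω s' a' * (Q s' ω a' - Q' s' ω a'))| +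
            |β ω s' * ∑ ω', πI s' ω' * (∑ a', π ω' s' a' * (Q s' ω' a' - Q' s' ω' a'))| :=
            abs_add_le _ _
        _ ≤ (1 - β ω s') * M + β ω s' * M := by
            gcongr
            · rw [abs_mul, abs_of_nonneg (by linarith [hβ1 ω s'] : (0:ℝ) ≤ 1 - β ω s')]
              exact mul_le_mul_of_nonneg_left (hQΩ s' ω) (by linarith [hβ1 ω s'])
            · rw [abs_mul, abs_of_nonneg (hβ0 ω s')]
              exact mul_le_mul_of_nonneg_left hsum (hβ0 ω s')
        _ = M := by ring
    have hdiff : T Q s ω a - T Q' s ω a = γ * ∑ s', P s a s' *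
        ((1 - β ω s') * (∑ a', π ω s' a' * (Q s' ω a' - Q' s' ω a')) +
          β ω s' * ∑ ω', πI s' ω' * (∑ a', π ω' s' a' * (Q s' ω' a' - Q' s' ω' a'))) := by
      rw [hT, hT]
      have hsplit : ∀ s', (1 - β ω s') * (∑ a', π ω s' a' * (Q s' ω a' - Q' s' ω a')) +
          β ω s' * ∑ ω', πI s' ω' * (∑ a', π ω' s' a' * (Q s' ω' a' - Q' s' ω' a')) =
          ((1 - β ω s') * (∑ a', π ω s' a' * Q s' ω a') +
            β ω s' * ∑ ω', πI s' ω' * (∑ a', π ω' s' a' * Q s' ω' a')) -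
          ((1 - β ω s') * (∑ a', π ω s' a' * Q' s' ω a') +
            β ω s' * ∑ ω', πI s' ω' * (∑ a', π ω' s' a' * Q' s' ω' a')) := by
        intro s'
        simp only [mul_sub, Finset.sum_sub_distrib]
        ring
      have hsum : ∑ s', P s a s' *
          ((1 - β ω s') * (∑ a', π ω s' a' * (Q s' ω a' - Q' s' ω a')) +
            β ω s' * ∑ ω', πI s' ω' * (∑ a', π ω' s' a' * (Q s' ω' a' - Q' s' ω' a'))) =
          (∑ s', P s a s' * ((1 - β ω s') * (∑ a', π ω s' a' * Q s' ω a') +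
            β ω s' * ∑ ω', πI s' ω' * (∑ a', π ω' s' a' * Q s' ω' a'))) -
          (∑ s', P s a s' * ((1 - β ω s') * (∑ a', π ω s' a' * Q' s' ω a') +
            β ω s' * ∑ ω', πI s' ω' * (∑ a', π ω' s' a' * Q' s' ω' a'))) := by
        rw [← Finset.sum_sub_distrib]
        exact Finset.sum_congr rfl fun s' _ => by rw [hsplit s']; ring
      rw [hsum]
      ring
    rw [hdiff, abs_mul, abs_of_nonneg hγ0]
    exact mul_le_mul_of_nonneg_left
      (convex_abs_le' _ _ (hP0 s a) (hP1 s a) M hg) hγ0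
  have hcontr : ∀ Q Q' : S → Ω → A → ℝ, ‖T Q - T Q'‖ ≤ γ * ‖Q - Q'‖ := by
    intro Q Q'
    have hM0 : 0 ≤ γ * ‖Q - Q'‖ := mul_nonneg hγ0 (norm_nonneg _)
    rw [pi_norm_le_iff_of_nonneg hM0]
    intro s
    rw [pi_norm_le_iff_of_nonneg hM0]
    intro ω
    rw [pi_norm_le_iff_of_nonneg hM0]
    intro a
    simpa [Real.norm_eq_abs] using key Q Q' s ω a
  refine ⟨hcontr, ?_⟩
  -- Banach fixed point
  set K : NNReal := ⟨γ, hγ0⟩ with hK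
  have hCW : ContractingWith K T := by
    constructor
    · exact_mod_cast hγ1
    · apply LipschitzWith.of_dist_le_mul
      intro Q Q'
      rw [dist_eq_norm, dist_eq_norm]
      exact hcontr Q Q'
  obtain ⟨QU, hQUfix, hQUuniq⟩ : ∃! QU : S → Ω → A → ℝ, T QU = QU := by
    refine ⟨hCW.fixedPoint, hCW.fixedPoint_isFixedPt, fun x hx => ?_⟩
    exact hCW.fixedPoint_unique hx
  refine ⟨(QU, fun s ω => ∑ a, π ω s a * QU s ω a), ⟨fun s ω => rfl, ?_⟩, ?_⟩
  · intro s ω a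
    conv_lhs => rw [← hQUfix]
    exact hT QU s ω a
  · rintro ⟨q1, q2⟩ ⟨h1, h2⟩
    have h1' : ∀ s ω, q2 s ω = ∑ a, π ω s a * q1 s ω a := h1
    have h2' : ∀ s ω a, q1 s ω a = r s a + γ * ∑ s', P s a s' *
        ((1 - β ω s') * q2 s' ω + β ω s' * ∑ ω', πI s' ω' * q2 s' ω') := h2
    have hq1fix : T q1 = q1 := by
      funext s ω a
      rw [hT]
      simp only [← h1']
      exact (h2' s ω a).symm
    have hq1 : q1 = QU := hQUuniq q1 hq1fix
    subst hq1
    exact Prod.ext rfl (funext fun s => funext fun ω => h1' s ω)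
end

section
/- Consider a finite MDP with options in which the interest function is parameterized: I : ℝ × S × Ω → ℝ, written I_z(s,ω), with z ↦ I_z(s,ω) differentiable for every (s,ω), I_z(s,ω) ≥ 0, and Σ_ω I_z(s,ω) π_Ω(ω|s) > 0 for every s and z; write π_{I_z} for the resulting interest policy over options and Q_Ω^z, Q_U^z for the unique solution of the coupled Bellman equations with policy over options π_{I_z}. Then for every state s and option ω, the map z ↦ Q_Ω^z(s,ω) is differentiable, and likewise z ↦ Q_U^z(s,ω,a) is differentiable for every action a. -/
open Finset Matrix

private lemma differentiable_det_aux {n : Type*} [Fintype n] [DecidableEq n]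
    (A : ℝ → Matrix n n ℝ) (h : ∀ i j, Differentiable ℝ (fun z => A z i j)) :
    Differentiable ℝ fun z => (A z).det := by
  simp only [Matrix.det_apply']
  exact Differentiable.fun_sum fun σ _ =>
    ((Differentiable.fun_finsetProd fun i _ => h (σ i) i)).const_mul _

private lemma det_one_sub_smul_ne_zero {n : Type*} [Fintype n] [DecidableEq n] [Nonempty n]
    (M : Matrix n n ℝ) (h0 : ∀ i j, 0 ≤ M i j) (h1 : ∀ i, ∑ j, M i j = 1)
    {γ : ℝ} (hγ0 : 0 ≤ γ) (hγ1 : γ < 1) :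
    ((1 : Matrix n n ℝ) - γ • M).det ≠ 0 := by
  intro hdet
  obtain ⟨v, hv0, hv⟩ := (Matrix.exists_mulVec_eq_zero_iff).2 hdet
  apply hv0
  have hveq : ∀ i, v i = γ * ∑ j, M i j * v j := by
    intro i
    have h := congrFun hv i
    rw [Matrix.sub_mulVec, Matrix.one_mulVec, Matrix.smul_mulVec] at h
    simp only [Pi.sub_apply, Pi.smul_apply, Pi.zero_apply, smul_eq_mul,
      Matrix.mulVec, dotProduct] at h
    linarith
  obtain ⟨i, _, hi⟩ := Finset.exists_max_image (Finset.univ : Finset n)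
    (fun j => |v j|) ⟨Classical.arbitrary n, Finset.mem_univ _⟩
  have hvi : |v i| ≤ γ * |v i| := by
    calc |v i| = γ * |∑ j, M i j * v j| := by rw [hveq i, abs_mul, abs_of_nonneg hγ0]
    _ ≤ γ * ∑ j, |M i j * v j| :=
        mul_le_mul_of_nonneg_left (Finset.abs_sum_le_sum_abs _ _) hγ0
    _ ≤ γ * ∑ j, M i j * |v i| := by
        refine mul_le_mul_of_nonneg_left (Finset.sum_le_sum fun j _ => ?_) hγ0
        rw [abs_mul, abs_of_nonneg (h0 i j)]
        exact mul_le_mul_of_nonneg_left (hi j (Finset.mem_univ j)) (h0 i j)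
    _ = γ * |v i| := by rw [← Finset.sum_mul, h1 i, one_mul]
  have hvi0 : |v i| = 0 := by nlinarith [abs_nonneg (v i)]
  funext j
  have hj := hi j (Finset.mem_univ j)
  rw [hvi0] at hj
  simpa using le_antisymm hj (abs_nonneg _)

/-- For a finite MDP with options with a parameterized interest function
`I_z` (differentiable in `z`), the option-value functions `Q_Ω^z` and `Q_U^z` solving the
coupled Bellman equations depend differentiably on `z`. -/
theorem option_value_differentiable_in_interest_parameter
    {S A Ω : Type*} [Fintype S] [Fintype A] [Fintype Ω]
    [Nonempty S] [Nonempty A] [Nonempty Ω]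
    (r : S → A → ℝ) (P : S → A → S → ℝ)
    (hP0 : ∀ s a s', 0 ≤ P s a s') (hP1 : ∀ s a, ∑ s', P s a s' = 1)
    (γ : ℝ) (hγ0 : 0 ≤ γ) (hγ1 : γ < 1)
    (π : Ω → S → A → ℝ)
    (hπ0 : ∀ ω s a, 0 ≤ π ω s a) (hπ1 : ∀ ω s, ∑ a, π ω s a = 1)
    (β : Ω → S → ℝ) (hβ0 : ∀ ω s, 0 ≤ β ω s) (hβ1 : ∀ ω s, β ω s ≤ 1)
    (πΩ : S → Ω → ℝ)
    (hπΩ0 : ∀ s ω, 0 ≤ πΩ s ω) (hπΩ1 : ∀ s, ∑ ω, πΩ s ω = 1)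
    (I : ℝ → S → Ω → ℝ)
    (hIdiff : ∀ s ω, Differentiable ℝ (fun z => I z s ω))
    (hI0 : ∀ z s ω, 0 ≤ I z s ω)
    (hIpos : ∀ z s, 0 < ∑ ω, I z s ω * πΩ s ω)
    (πI : ℝ → S → Ω → ℝ)
    (hπI : ∀ z s ω, πI z s ω = I z s ω * πΩ s ω / ∑ ω', I z s ω' * πΩ s ω')
    (QU : ℝ → S → Ω → A → ℝ) (QΩ : ℝ → S → Ω → ℝ)
    (hQΩ : ∀ z s ω, QΩ z s ω = ∑ a, π ω s a * QU z s ω a)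
    (hQU : ∀ z s ω a, QU z s ω a = r s a + γ * ∑ s', P s a s' *
      ((1 - β ω s') * QΩ z s' ω + β ω s' * ∑ ω', πI z s' ω' * QΩ z s' ω')) :
    (∀ s ω, Differentiable ℝ (fun z => QΩ z s ω)) ∧
    (∀ s ω a, Differentiable ℝ (fun z => QU z s ω a)) := by
  classical
  -- basic facts about πI
  have hπIdiff : ∀ s ω, Differentiable ℝ (fun z => πI z s ω) := by
    intro s ω
    have h : (fun z => πI z s ω)
        = fun z => I z s ω * πΩ s ω / ∑ ω', I z s ω' * πΩ s ω' := by
      funext z; exact hπI z s ω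
    rw [h]
    exact Differentiable.div ((hIdiff s ω).mul_const _)
      (Differentiable.fun_sum fun ω' _ => (hIdiff s ω').mul_const _)
      (fun z => ne_of_gt (hIpos z s))
  have hπI0 : ∀ z s ω, 0 ≤ πI z s ω := by
    intro z s ω
    rw [hπI]
    exact div_nonneg (mul_nonneg (hI0 z s ω) (hπΩ0 s ω)) (le_of_lt (hIpos z s))
  have hπI1 : ∀ z s, ∑ ω, πI z s ω = 1 := by
    intro z s
    simp only [hπI]
    rw [← Finset.sum_div, div_self (ne_of_gt (hIpos z s))]
  -- the Bellman matrix and constants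
  set M : ℝ → Matrix (S × Ω) (S × Ω) ℝ := fun z p q =>
    ∑ a, π p.2 p.1 a * P p.1 a q.1 *
      ((if q.2 = p.2 then (1:ℝ) else 0) * (1 - β p.2 q.1) + β p.2 q.1 * πI z q.1 q.2)
    with hM
  set c : S × Ω → ℝ := fun p => ∑ a, π p.2 p.1 a * r p.1 a with hc
  have hXsum : ∀ z (p : S × Ω) (s' : S),
      ∑ ω' : Ω, ((if ω' = p.2 then (1:ℝ) else 0) * (1 - β p.2 s')
        + β p.2 s' * πI z s' ω') = 1 := by
    intro z p s'
    rw [Finset.sum_add_distrib]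
    have e1 : ∑ ω' : Ω, (if ω' = p.2 then (1:ℝ) else 0) * (1 - β p.2 s')
        = 1 - β p.2 s' := by
      rw [Finset.sum_eq_single p.2] <;> simp +contextual
    have e2 : ∑ ω' : Ω, β p.2 s' * πI z s' ω' = β p.2 s' := by
      rw [← Finset.mul_sum, hπI1 z s', mul_one]
    rw [e1, e2]; ring
  have hM0 : ∀ z p q, 0 ≤ M z p q := by
    intro z p q
    refine Finset.sum_nonneg fun a _ => ?_
    have h1 : (0:ℝ) ≤ (if q.2 = p.2 then (1:ℝ) else 0) := by positivity
    have h2 : (0:ℝ) ≤ 1 - β p.2 q.1 := by linarith [hβ1 p.2 q.1]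
    exact mul_nonneg (mul_nonneg (hπ0 _ _ _) (hP0 _ _ _))
      (add_nonneg (mul_nonneg h1 h2) (mul_nonneg (hβ0 _ _) (hπI0 _ _ _)))
  have hM1 : ∀ z p, ∑ q, M z p q = 1 := by
    intro z p
    rw [Fintype.sum_prod_type]
    have h : ∀ s' : S, ∑ ω' : Ω, M z p (s', ω') = ∑ a, π p.2 p.1 a * P p.1 a s' := by
      intro s'
      simp only [hM]
      rw [Finset.sum_comm]
      refine Finset.sum_congr rfl fun a _ => ?_
      rw [← Finset.mul_sum, hXsum z p s', mul_one]
    rw [Finset.sum_congr rfl fun s' _ => h s', Finset.sum_comm,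
      Finset.sum_congr rfl fun a _ => by rw [← Finset.mul_sum, hP1 p.1 a, mul_one]]
    exact hπ1 p.2 p.1
  have hMdiff : ∀ p q, Differentiable ℝ fun z => M z p q := by
    intro p q
    refine Differentiable.fun_sum fun a _ => Differentiable.const_mul ?_ _
    exact Differentiable.add (differentiable_const _)
      ((hπIdiff q.1 q.2).const_mul _)
  -- A z = 1 - γ • M z
  set Amat : ℝ → Matrix (S × Ω) (S × Ω) ℝ := fun z => 1 - γ • M z with hA
  have hAdiff : ∀ p q, Differentiable ℝ fun z => Amat z p q := by
    intro p q
    simp only [hA, Matrix.sub_apply, Matrix.smul_apply, smul_eq_mul, Matrix.one_apply]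
    exact Differentiable.sub (differentiable_const _) ((hMdiff p q).const_mul _)
  have hAdet : ∀ z, (Amat z).det ≠ 0 := fun z =>
    det_one_sub_smul_ne_zero (M z) (hM0 z) (hM1 z) hγ0 hγ1
  -- the Bellman equation in matrix form
  set v : ℝ → (S × Ω) → ℝ := fun z p => QΩ z p.1 p.2 with hvdef
  have hbellman : ∀ z, Amat z *ᵥ v z = c := by
    intro z
    funext p
    obtain ⟨s, ω⟩ := p
    have hinner : ∀ s', ∑ ω', M z (s, ω) (s', ω') * QΩ z s' ω'
        = ∑ a, π ω s a * (P s a s' *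
          ((1 - β ω s') * QΩ z s' ω + β ω s' * ∑ ω', πI z s' ω' * QΩ z s' ω')) := by
      intro s'
      simp only [hM, Finset.sum_mul]
      rw [Finset.sum_comm]
      refine Finset.sum_congr rfl fun a _ => ?_
      simp only [mul_assoc]
      rw [← Finset.mul_sum, ← Finset.mul_sum]
      congr 2
      rw [Finset.sum_congr rfl fun ω' _ => (add_mul _ _ _ : _ = _),
        Finset.sum_add_distrib]
      congr 1
      · rw [Finset.sum_eq_single ω] <;> simp +contextual
      · simp only [mul_assoc]
        rw [← Finset.mul_sum]
    have hMv : ∑ q, M z (s, ω) q * v z q =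
        ∑ a, π ω s a * ∑ s', P s a s' *
          ((1 - β ω s') * QΩ z s' ω + β ω s' * ∑ ω', πI z s' ω' * QΩ z s' ω') := by
      rw [Fintype.sum_prod_type]
      calc ∑ s', ∑ ω', M z (s, ω) (s', ω') * v z (s', ω')
          = ∑ s', ∑ a, π ω s a * (P s a s' *
            ((1 - β ω s') * QΩ z s' ω + β ω s' * ∑ ω', πI z s' ω' * QΩ z s' ω')) :=
            Finset.sum_congr rfl fun s' _ => hinner s'
        _ = ∑ a, ∑ s', π ω s a * (P s a s' *
            ((1 - β ω s') * QΩ z s' ω + β ω s' * ∑ ω', πI z s' ω' * QΩ z s' ω')) :=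
            Finset.sum_comm
        _ = _ := Finset.sum_congr rfl fun a _ => by rw [Finset.mul_sum]
    have hq : QΩ z s ω = c (s, ω) + γ * ∑ a, π ω s a * ∑ s', P s a s' *
        ((1 - β ω s') * QΩ z s' ω + β ω s' * ∑ ω', πI z s' ω' * QΩ z s' ω') := by
      rw [hQΩ z s ω]
      simp only [hc]
      rw [Finset.mul_sum, ← Finset.sum_add_distrib]
      refine Finset.sum_congr rfl fun a _ => ?_
      rw [hQU z s ω a]; ring
    have hexp : (Amat z *ᵥ v z) (s, ω)
        = v z (s, ω) - γ * ∑ q, M z (s, ω) q * v z q := by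
      rw [hA]
      rw [Matrix.sub_mulVec, Matrix.one_mulVec, Matrix.smul_mulVec]
      simp only [Pi.sub_apply, Pi.smul_apply, smul_eq_mul, Matrix.mulVec,
        dotProduct]
    rw [hexp, hMv]
    simp only [hvdef]
    rw [hq]; ring
  -- solve the linear system
  have hvsol : ∀ z p, v z p
      = ∑ q, ((Amat z).det⁻¹ * (Amat z).adjugate p q) * c q := by
    intro z p
    have hdetu : IsUnit (Amat z).det := isUnit_iff_ne_zero.mpr (hAdet z)
    have h1 : v z = (Amat z)⁻¹ *ᵥ c := by
      rw [← hbellman z, Matrix.mulVec_mulVec, Matrix.nonsing_inv_mul _ hdetu,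
        Matrix.one_mulVec]
    rw [congrFun h1 p]
    simp only [Matrix.inv_def, Matrix.mulVec, dotProduct, Matrix.smul_apply,
      smul_eq_mul, Ring.inverse_eq_inv']
  -- differentiability of QΩ
  have hQΩdiff : ∀ s ω, Differentiable ℝ (fun z => QΩ z s ω) := by
    intro s ω
    have h : (fun z => QΩ z s ω) = fun z => ∑ q,
        ((Amat z).det⁻¹ * (Amat z).adjugate (s, ω) q) * c q := by
      funext z; exact hvsol z (s, ω)
    rw [h]
    refine Differentiable.fun_sum fun q _ => Differentiable.mul_const ?_ _
    refine Differentiable.mul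
      (Differentiable.inv (differentiable_det_aux _ hAdiff) hAdet) ?_
    have h2 : (fun z => (Amat z).adjugate (s, ω) q)
        = fun z => ((Amat z).updateRow q (Pi.single (s, ω) 1)).det := by
      funext z; exact Matrix.adjugate_apply _ _ _
    rw [h2]
    refine differentiable_det_aux _ fun i j => ?_
    by_cases hiq : i = q
    · simp [hiq, Matrix.updateRow_apply]
    · simp only [Matrix.updateRow_apply, if_neg hiq]
      exact hAdiff i j
  refine ⟨hQΩdiff, fun s ω a => ?_⟩
  have h : (fun z => QU z s ω a) = fun z => r s a + γ * ∑ s', P s a s' *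
      ((1 - β ω s') * QΩ z s' ω + β ω s' * ∑ ω', πI z s' ω' * QΩ z s' ω') := by
    funext z; exact hQU z s ω a
  rw [h]
  refine (Differentiable.const_mul (Differentiable.fun_sum fun s' _ =>
    Differentiable.const_mul (Differentiable.add
      ((hQΩdiff s' ω).const_mul _)
      (Differentiable.const_mul (Differentiable.fun_sum fun ω' _ =>
        (hπIdiff s' ω').mul (hQΩdiff s' ω')) _)) _) _).const_add _
end

section
/- Consider a finite MDP with options in which the interest function is parameterized: I : ℝ × S × Ω → ℝ, written I_z(s,ω), with z ↦ I_z(s,ω) differentiable for every (s,ω), I_z(s,ω) ≥ 0, and Σ_ω I_z(s,ω) π_Ω(ω|s) > 0 for every s and z; write π_{I_z} for the resulting interest policy over options and Q_Ω^z for the corresponding option-value function over options. Then the derivative of the option-value function with respect to z satisfies the recursive (one-step expansion) identity: ∂Q_Ω^z(s,ω)/∂z = g_z(s,ω) + γ Σ_{(s',ω')} P₁^z((s',ω')|(s,ω)) ∂Q_Ω^z(s',ω')/∂z, where g_z(s,ω) = γ Σ_a π_ω(a|s) Σ_{s'} P(s'|s,a) β_ω(s') Σ_{ω'} (∂π_{I_z}(ω'|s')/∂z)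 Q_Ω^z(s',ω') and P₁^z((s',ω')|(s,ω)) = Σ_a π_ω(a|s) P(s'|s,a) [ (1−β_ω(s')) 1{ω'=ω} + β_ω(s') π_{I_z}(ω'|s') ] is the augmented transition kernel over state-option pairs. -/
lemma my_differentiable_det {n : Type*} [Fintype n] [DecidableEq n]
    (M : ℝ → Matrix n n ℝ) (h : ∀ i j, Differentiable ℝ fun z => M z i j) :
    Differentiable ℝ fun z => (M z).det := by
  simp only [Matrix.det_apply, Units.smul_def, zsmul_eq_mul]
  exact Differentiable.fun_sum fun σ _ =>
    ((Differentiable.fun_finset_prod fun i _ => h (σ i) i)).const_mul _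

lemma my_differentiable_adjugate {n : Type*} [Fintype n] [DecidableEq n]
    (M : ℝ → Matrix n n ℝ) (h : ∀ i j, Differentiable ℝ fun z => M z i j) (i j : n) :
    Differentiable ℝ fun z => (M z).adjugate i j := by
  simp only [Matrix.adjugate_apply]
  apply my_differentiable_det
  intro k l
  by_cases hk : k = j <;> simp [Matrix.updateRow_apply, hk, h]



/-- The derivative of the option-value function `Q_Ω^z` with respect to the
interest parameter `z` satisfies the recursive (one-step expansion) identity
`∂Q_Ω^z(s,ω)/∂z = g_z(s,ω) + γ Σ_{(s',ω')} P₁^z((s',ω')|(s,ω)) ∂Q_Ω^z(s',ω')/∂z`. -/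
theorem interest_gradient_one_step_expansion
    {S A Ω : Type*} [Fintype S] [Fintype A] [Fintype Ω]
    [DecidableEq S] [DecidableEq A] [DecidableEq Ω]
    [Nonempty S] [Nonempty A] [Nonempty Ω]
    (r : S → A → ℝ) (P : S → A → S → ℝ)
    (hP0 : ∀ s a s', 0 ≤ P s a s') (hP1 : ∀ s a, ∑ s', P s a s' = 1)
    (γ : ℝ) (hγ0 : 0 ≤ γ) (hγ1 : γ < 1)
    (π : Ω → S → A → ℝ)
    (hπ0 : ∀ ω s a, 0 ≤ π ω s a) (hπ1 : ∀ ω s, ∑ a, π ω s a = 1)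
    (β : Ω → S → ℝ) (hβ0 : ∀ ω s, 0 ≤ β ω s) (hβ1 : ∀ ω s, β ω s ≤ 1)
    (πΩ : S → Ω → ℝ)
    (hπΩ0 : ∀ s ω, 0 ≤ πΩ s ω) (hπΩ1 : ∀ s, ∑ ω, πΩ s ω = 1)
    (I : ℝ → S → Ω → ℝ)
    (hIdiff : ∀ s ω, Differentiable ℝ (fun z => I z s ω))
    (hI0 : ∀ z s ω, 0 ≤ I z s ω)
    (hIpos : ∀ z s, 0 < ∑ ω, I z s ω * πΩ s ω)
    (πI : ℝ → S → Ω → ℝ)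
    (hπI : ∀ z s ω, πI z s ω = I z s ω * πΩ s ω / ∑ ω', I z s ω' * πΩ s ω')
    (QU : ℝ → S → Ω → A → ℝ) (QΩ : ℝ → S → Ω → ℝ)
    (hQΩ : ∀ z s ω, QΩ z s ω = ∑ a, π ω s a * QU z s ω a)
    (hQU : ∀ z s ω a, QU z s ω a = r s a + γ * ∑ s', P s a s' *
      ((1 - β ω s') * QΩ z s' ω + β ω s' * ∑ ω', πI z s' ω' * QΩ z s' ω'))
    (P₁ : ℝ → Matrix (S × Ω) (S × Ω) ℝ)
    (hP₁ : ∀ z s ω s' ω', P₁ z (s, ω) (s', ω') =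
      ∑ a, π ω s a * P s a s' *
        ((1 - β ω s') * (if ω' = ω then 1 else 0) + β ω s' * πI z s' ω')) :
    ∀ z s ω,
      deriv (fun z => QΩ z s ω) z =
        (γ * ∑ a, π ω s a * ∑ s', P s a s' * (β ω s' *
            ∑ ω', deriv (fun z => πI z s' ω') z * QΩ z s' ω')) +
          γ * ∑ x : S × Ω, P₁ z (s, ω) x * deriv (fun z => QΩ z x.1 x.2) z := by
  -- basic facts about πI
  have hden : ∀ z s, (∑ ω', I z s ω' * πΩ s ω') ≠ 0 := fun z s => (hIpos z s).ne'
  have hπIdiff : ∀ s ω, Differentiable ℝ fun z => πI z s ω := by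
    intro s ω
    have he : (fun z => πI z s ω)
        = fun z => (I z s ω * πΩ s ω) / ∑ ω', I z s ω' * πΩ s ω' :=
      funext fun z => hπI z s ω
    rw [he]
    exact ((hIdiff s ω).mul_const _).div
      (Differentiable.fun_sum fun ω' _ => (hIdiff s ω').mul_const _) (fun z => hden z s)
  have hπI0 : ∀ z s ω, 0 ≤ πI z s ω := fun z s ω => by
    rw [hπI]; exact div_nonneg (mul_nonneg (hI0 _ _ _) (hπΩ0 _ _)) (hIpos z s).le
  have hπIsum : ∀ z s, ∑ ω', πI z s ω' = 1 := fun z s => by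
    simp only [hπI]; rw [← Finset.sum_div, div_self (hden z s)]
  -- basic facts about P₁
  have hM0 : ∀ z x y, 0 ≤ P₁ z x y := by
    rintro z ⟨s, ω⟩ ⟨s', ω'⟩
    rw [hP₁]
    refine Finset.sum_nonneg fun a _ => ?_
    refine mul_nonneg (mul_nonneg (hπ0 _ _ _) (hP0 _ _ _)) (add_nonneg ?_ ?_)
    · exact mul_nonneg (by linarith [hβ1 ω s']) (by split <;> norm_num)
    · exact mul_nonneg (hβ0 _ _) (hπI0 _ _ _)
  have hM1 : ∀ z x, ∑ y : S × Ω, P₁ z x y = 1 := by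
    rintro z ⟨s, ω⟩
    rw [Fintype.sum_prod_type]
    have key : ∀ s', ∑ ω', P₁ z (s, ω) (s', ω') = ∑ a, π ω s a * P s a s' := by
      intro s'
      simp only [hP₁]
      rw [Finset.sum_comm]
      refine Finset.sum_congr rfl fun a _ => ?_
      rw [← Finset.mul_sum]
      have : ∑ ω', ((1 - β ω s') * (if ω' = ω then 1 else 0) + β ω s' * πI z s' ω')
          = (1 - β ω s') + β ω s' := by
        rw [Finset.sum_add_distrib, ← Finset.mul_sum, ← Finset.mul_sum, hπIsum]
        simp
      rw [this]; ring
    simp only [key]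
    rw [Finset.sum_comm]
    simp only [← Finset.mul_sum, hP1, mul_one, hπ1]
  have hMdiff : ∀ x y : S × Ω, Differentiable ℝ fun z => P₁ z x y := by
    rintro ⟨s, ω⟩ ⟨s', ω'⟩
    have he : (fun z => P₁ z (s, ω) (s', ω')) = fun z => ∑ a, π ω s a * P s a s' *
        ((1 - β ω s') * (if ω' = ω then 1 else 0) + β ω s' * πI z s' ω') :=
      funext fun z => hP₁ z s ω s' ω'
    rw [he]
    exact Differentiable.fun_sum fun a _ =>
      (((hπIdiff s' ω').const_mul _).const_add _).const_mul _
  -- Bellman equation in matrix form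
  set b : S × Ω → ℝ := fun x => ∑ a, π x.2 x.1 a * r x.1 a with hb
  have hBell : ∀ z (x : S × Ω), QΩ z x.1 x.2
      = b x + γ * ∑ y : S × Ω, P₁ z x y * QΩ z y.1 y.2 := by
    rintro z ⟨s, ω⟩
    have expand : ∀ s' a, (∑ ω', π ω s a * P s a s' *
          ((1 - β ω s') * (if ω' = ω then 1 else 0) + β ω s' * πI z s' ω') * QΩ z s' ω')
        = π ω s a * (P s a s' * ((1 - β ω s') * QΩ z s' ω
            + β ω s' * ∑ ω', πI z s' ω' * QΩ z s' ω')) := by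
      intro s' a
      have hite : ∑ ω', (if ω' = ω then (1:ℝ) else 0) * QΩ z s' ω' = QΩ z s' ω := by
        simp
      calc ∑ ω', π ω s a * P s a s' *
            ((1 - β ω s') * (if ω' = ω then 1 else 0) + β ω s' * πI z s' ω') * QΩ z s' ω'
          = ∑ ω', (π ω s a * P s a s' * (1 - β ω s') *
              ((if ω' = ω then 1 else 0) * QΩ z s' ω')
            + π ω s a * P s a s' * β ω s' * (πI z s' ω' * QΩ z s' ω')) :=
            Finset.sum_congr rfl fun ω' _ => by ring
        _ = π ω s a * P s a s' * (1 - β ω s') *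
              (∑ ω', (if ω' = ω then (1:ℝ) else 0) * QΩ z s' ω')
            + π ω s a * P s a s' * β ω s' * ∑ ω', πI z s' ω' * QΩ z s' ω' := by
            rw [Finset.sum_add_distrib, Finset.mul_sum, Finset.mul_sum]
        _ = _ := by rw [hite]; ring
    calc QΩ z s ω
        = ∑ a, π ω s a * (r s a + γ * ∑ s', P s a s' * ((1 - β ω s') * QΩ z s' ω
            + β ω s' * ∑ ω', πI z s' ω' * QΩ z s' ω')) := by
          rw [hQΩ]; exact Finset.sum_congr rfl fun a _ => by rw [hQU]
      _ = (∑ a, π ω s a * r s a) + γ * ∑ a, ∑ s', π ω s a * (P s a s' *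
            ((1 - β ω s') * QΩ z s' ω + β ω s' * ∑ ω', πI z s' ω' * QΩ z s' ω')) := by
          have key : ∀ a, π ω s a * (r s a + γ * ∑ s', P s a s' * ((1 - β ω s') * QΩ z s' ω
              + β ω s' * ∑ ω', πI z s' ω' * QΩ z s' ω'))
              = π ω s a * r s a + γ * ∑ s', π ω s a * (P s a s' * ((1 - β ω s') * QΩ z s' ω
              + β ω s' * ∑ ω', πI z s' ω' * QΩ z s' ω')) := by
            intro a; rw [← Finset.mul_sum]; ring
          simp only [key]
          rw [Finset.sum_add_distrib, ← Finset.mul_sum]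
      _ = (∑ a, π ω s a * r s a)
            + γ * ∑ s', ∑ ω', P₁ z (s, ω) (s', ω') * QΩ z s' ω' := by
          congr 1
          rw [Finset.sum_comm]
          congr 1
          refine Finset.sum_congr rfl fun s' _ => ?_
          simp only [hP₁, Finset.sum_mul]
          rw [Finset.sum_comm]
          exact (Finset.sum_congr rfl fun a _ => expand s' a).symm
      _ = b (s, ω) + γ * ∑ y : S × Ω, P₁ z (s, ω) y * QΩ z y.1 y.2 := by
          rw [Fintype.sum_prod_type]
  -- invertibility
  have hdet : ∀ z, ((1 : Matrix (S × Ω) (S × Ω) ℝ) - γ • P₁ z).det ≠ 0 := by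
    intro z hd
    obtain ⟨v, hv, hv0⟩ := (Matrix.exists_mulVec_eq_zero_iff).mpr hd
    obtain ⟨x₀, -, hx₀⟩ := Finset.exists_max_image Finset.univ (fun y => |v y|)
      Finset.univ_nonempty
    have hvx : ∀ x, v x = γ * ∑ y, P₁ z x y * v y := by
      intro x
      have := congrFun hv0 x
      simp only [Matrix.mulVec, Matrix.sub_apply, Matrix.one_apply, Matrix.smul_apply,
        Pi.zero_apply, dotProduct, sub_mul, Finset.sum_sub_distrib, ite_mul,
        one_mul, zero_mul, Finset.sum_ite_eq, Finset.mem_univ, if_true, smul_eq_mul,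
        mul_assoc] at this
      rw [← Finset.mul_sum] at this
      linarith
    have hle : |v x₀| ≤ γ * |v x₀| := by
      calc |v x₀| = γ * |∑ y, P₁ z x₀ y * v y| := by
            rw [hvx x₀, abs_mul, abs_of_nonneg hγ0]
        _ ≤ γ * ∑ y, P₁ z x₀ y * |v y| := by
            refine mul_le_mul_of_nonneg_left ?_ hγ0
            refine (Finset.abs_sum_le_sum_abs _ _).trans ?_
            refine Finset.sum_le_sum fun y _ => ?_
            rw [abs_mul, abs_of_nonneg (hM0 z x₀ y)]
        _ ≤ γ * ∑ y, P₁ z x₀ y * |v x₀| := by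
            refine mul_le_mul_of_nonneg_left ?_ hγ0
            exact Finset.sum_le_sum fun y _ =>
              mul_le_mul_of_nonneg_left (hx₀ y (Finset.mem_univ y)) (hM0 z x₀ y)
        _ = γ * |v x₀| := by rw [← Finset.sum_mul, hM1, one_mul]
    have hx0 : |v x₀| = 0 := by nlinarith [abs_nonneg (v x₀)]
    exact hv (funext fun y => abs_eq_zero.mp
      (le_antisymm ((hx₀ y (Finset.mem_univ y)).trans hx0.le) (abs_nonneg _)))
  -- uniqueness: QΩ equals the explicit solution
  have hQF : ∀ z (x : S × Ω), QΩ z x.1 x.2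
      = (((1 : Matrix (S × Ω) (S × Ω) ℝ) - γ • P₁ z)⁻¹).mulVec b x := by
    intro z x
    set Az := (1 : Matrix (S × Ω) (S × Ω) ℝ) - γ • P₁ z with hAz
    have hA : Az.mulVec (fun y => QΩ z y.1 y.2) = b := by
      funext x'
      simp only [hAz, Matrix.mulVec, dotProduct, Matrix.sub_apply, Matrix.one_apply,
        Matrix.smul_apply, sub_mul, Finset.sum_sub_distrib, ite_mul, one_mul, zero_mul,
        Finset.sum_ite_eq, Finset.mem_univ, if_true, smul_eq_mul, mul_assoc]
      rw [← Finset.mul_sum, hBell z x']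
      ring
    have : Az⁻¹.mulVec (Az.mulVec (fun y => QΩ z y.1 y.2)) = Az⁻¹.mulVec b := by rw [hA]
    rw [Matrix.mulVec_mulVec, Matrix.nonsing_inv_mul Az (isUnit_iff_ne_zero.mpr (hdet z)),
      Matrix.one_mulVec, funext_iff] at this
    exact this x
  -- differentiability of QΩ
  have hQdiff : ∀ x : S × Ω, Differentiable ℝ fun z => QΩ z x.1 x.2 := by
    intro x
    have he : (fun z => QΩ z x.1 x.2)
        = fun z => ∑ y, (((1 : Matrix (S × Ω) (S × Ω) ℝ) - γ • P₁ z).det)⁻¹ *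
            ((1 : Matrix (S × Ω) (S × Ω) ℝ) - γ • P₁ z).adjugate x y * b y := by
      funext z
      rw [hQF z x]
      simp only [Matrix.mulVec, dotProduct, Matrix.inv_def, Ring.inverse_eq_inv',
        Matrix.smul_apply, smul_eq_mul]
    rw [he]
    have hAdiff : ∀ i j : S × Ω, Differentiable ℝ
        fun z => ((1 : Matrix (S × Ω) (S × Ω) ℝ) - γ • P₁ z) i j := by
      intro i j
      simp only [Matrix.sub_apply, Matrix.one_apply, Matrix.smul_apply, smul_eq_mul]
      exact (differentiable_const _).sub ((hMdiff i j).const_mul _)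
    exact Differentiable.fun_sum fun y _ =>
      (((my_differentiable_det _ hAdiff).inv hdet).mul
        (my_differentiable_adjugate _ hAdiff x y)).mul_const _
  -- the final computation
  intro z s ω
  set d : S × Ω → ℝ := fun y => deriv (fun z => QΩ z y.1 y.2) z with hd
  have hQd : ∀ y : S × Ω, HasDerivAt (fun z => QΩ z y.1 y.2) (d y) z :=
    fun y => ((hQdiff y) z).hasDerivAt
  set D : S × Ω → ℝ := fun y => ∑ a, π ω s a * P s a y.1 *
    (β ω y.1 * deriv (fun z => πI z y.1 y.2) z) with hD
  have hMd : ∀ y : S × Ω, HasDerivAt (fun z => P₁ z (s, ω) y) (D y) z := by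
    rintro ⟨s', ω'⟩
    have he : (fun z => P₁ z (s, ω) (s', ω')) = fun z => ∑ a, π ω s a * P s a s' *
        ((1 - β ω s') * (if ω' = ω then 1 else 0) + β ω s' * πI z s' ω') :=
      funext fun z => hP₁ z s ω s' ω'
    rw [he, hD]
    exact HasDerivAt.fun_sum fun a _ =>
      ((((hπIdiff s' ω' z).hasDerivAt.const_mul (β ω s')).const_add _).const_mul _)
  have hF : HasDerivAt (fun z => QΩ z s ω)
      (γ * ∑ y : S × Ω, (D y * QΩ z y.1 y.2 + P₁ z (s, ω) y * d y)) z := by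
    have he : (fun z => QΩ z s ω)
        = fun z => b (s, ω) + γ * ∑ y : S × Ω, P₁ z (s, ω) y * QΩ z y.1 y.2 :=
      funext fun z => hBell z (s, ω)
    rw [he]
    exact ((HasDerivAt.fun_sum fun y _ => (hMd y).mul (hQd y)).const_mul γ).const_add _
  rw [hF.deriv, Finset.sum_add_distrib, mul_add]
  congr 1
  congr 1
  calc ∑ y : S × Ω, D y * QΩ z y.1 y.2
      = ∑ s', ∑ ω', ∑ a, (π ω s a * P s a s' *
          (β ω s' * deriv (fun z => πI z s' ω') z)) * QΩ z s' ω' := by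
        rw [Fintype.sum_prod_type]
        exact Finset.sum_congr rfl fun s' _ => Finset.sum_congr rfl fun ω' _ => by
          simp only [hD, Finset.sum_mul]
    _ = ∑ s', ∑ a, ∑ ω', (π ω s a * P s a s' *
          (β ω s' * deriv (fun z => πI z s' ω') z)) * QΩ z s' ω' :=
        Finset.sum_congr rfl fun s' _ => Finset.sum_comm
    _ = ∑ a, ∑ s', ∑ ω', (π ω s a * P s a s' *
          (β ω s' * deriv (fun z => πI z s' ω') z)) * QΩ z s' ω' := Finset.sum_comm
    _ = ∑ a, π ω s a * ∑ s', P s a s' * (β ω s' *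
          ∑ ω', deriv (fun z => πI z s' ω') z * QΩ z s' ω') := by
        simp only [Finset.mul_sum]
        exact Finset.sum_congr rfl fun a _ => Finset.sum_congr rfl fun s' _ =>
          Finset.sum_congr rfl fun ω' _ => by ring
end

section
/- (Interest-function policy gradient, Theorem 1.) Consider a finite MDP with options in which the interest function is parameterized: I : ℝ × S × Ω → ℝ, written I_z(s,ω), with z ↦ I_z(s,ω) differentiable for every (s,ω), I_z(s,ω) ≥ 0, and Σ_ω I_z(s,ω) π_Ω(ω|s) > 0 for every s and z; write π_{I_z} for the resulting interest policy over options, Q_Ω^z for the corresponding option-value function over options, P₁^z((s',ω')|(s,ω)) = Σ_a π_ω(a|s) P(s'|s,a) [ (1−β_ω(s')) 1{ω'=ω} + β_ω(s') π_{I_z}(ω'|s') ] for the augmented transition kernel over state-option pairs, and μ̂^z((s̃,ω̃)|(s,ω)) = Σ_{t=0}^∞ γ^t (P₁^z)^t((s̃,ω̃)|(s,ω)) for the discounted weighting of state-option pairs along trajectories starting from (s,ω). Then the gradient of the expected discounted return with respect to z at (s,ω) is: ∂Q_Ω^z(s,ω)/∂z = Σ_{(s̃,ω̃)} μ̂^z((s̃,ω̃)|(s,ω))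 · γ Σ_a π_{ω̃}(a|s̃) Σ_{s'} P(s'|s̃,a) β_{ω̃}(s') Σ_{ω'} (∂π_{I_z}(ω'|s')/∂z) Q_Ω^z(s',ω'). -/
section Helpers

private lemma iocpg_sum_rot3 {S A Ω : Type*} [Fintype S] [Fintype A] [Fintype Ω]
    (f : S → Ω → A → ℝ) :
    ∑ s, ∑ ω, ∑ a, f s ω a = ∑ a, ∑ s, ∑ ω, f s ω a :=
  (Finset.sum_congr rfl fun _ _ => Finset.sum_comm).trans Finset.sum_comm

private lemma iocpg_sum_alg {S A Ω : Type*} [Fintype S] [Fintype A] [Fintype Ω] [DecidableEq Ω]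
    (π : A → ℝ) (P : A → S → ℝ) (β : S → ℝ) (πI : S → Ω → ℝ) (Q : S → Ω → ℝ) (ω : Ω) :
    ∑ y : S × Ω, (∑ a, π a * P a y.1 * ((1 - β y.1) * (if y.2 = ω then 1 else 0)
        + β y.1 * πI y.1 y.2)) * Q y.1 y.2
      = ∑ a, π a * ∑ s', P a s' * ((1 - β s') * Q s' ω
        + β s' * ∑ ω', πI s' ω' * Q s' ω') := by
  rw [Fintype.sum_prod_type]
  simp only [Finset.sum_mul]
  rw [iocpg_sum_rot3]
  apply Finset.sum_congr rfl; intro a _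
  rw [Finset.mul_sum]
  apply Finset.sum_congr rfl; intro s' _
  simp only [add_mul, mul_add, mul_ite, ite_mul, mul_one, mul_zero, zero_mul,
    Finset.sum_add_distrib, Finset.sum_ite_eq, Finset.sum_ite_eq', Finset.mem_univ, if_true,
    Finset.mul_sum]
  ring_nf

private lemma iocpg_sum_alg2 {S A Ω : Type*} [Fintype S] [Fintype A] [Fintype Ω]
    (π : A → ℝ) (P : A → S → ℝ) (β : S → ℝ) (d : S → Ω → ℝ) (Q : S → Ω → ℝ) (γ : ℝ) :
    γ * ∑ y : S × Ω, (∑ a, π a * P a y.1 * (β y.1 * d y.1 y.2)) * Q y.1 y.2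
      = γ * ∑ a, π a * ∑ s', P a s' * (β s' * ∑ ω', d s' ω' * Q s' ω') := by
  congr 1
  rw [Fintype.sum_prod_type]
  simp only [Finset.sum_mul]
  rw [iocpg_sum_rot3]
  apply Finset.sum_congr rfl; intro a _
  rw [Finset.mul_sum]
  apply Finset.sum_congr rfl; intro s' _
  simp only [Finset.mul_sum]
  apply Finset.sum_congr rfl; intro ω' _
  ring

private lemma iocpg_stoch_pow {n : Type*} [Fintype n] [DecidableEq n] (A : Matrix n n ℝ)
    (h0 : ∀ i j, 0 ≤ A i j) (h1 : ∀ i, ∑ j, A i j = 1) (t : ℕ) :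
    (∀ i j, 0 ≤ (A ^ t) i j) ∧ (∀ i, ∑ j, (A ^ t) i j = 1) := by
  induction t with
  | zero =>
    refine ⟨fun i j => ?_, fun i => ?_⟩
    · rw [pow_zero, Matrix.one_apply]; positivity
    · rw [pow_zero]; simp [Matrix.one_apply]
  | succ t ih =>
    obtain ⟨ih0, ih1⟩ := ih
    rw [pow_succ]
    refine ⟨fun i j => ?_, fun i => ?_⟩
    · rw [Matrix.mul_apply]
      exact Finset.sum_nonneg fun w _ => mul_nonneg (ih0 i w) (h0 w j)
    · simp only [Matrix.mul_apply]
      rw [Finset.sum_comm]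
      simp only [← Finset.mul_sum, h1]
      simpa using ih1 i

private lemma iocpg_mu_inv {n : Type*} [Fintype n] [DecidableEq n] (A : Matrix n n ℝ) (γ : ℝ)
    (hγ0 : 0 ≤ γ) (hγ1 : γ < 1)
    (h0 : ∀ i j, 0 ≤ A i j) (h1 : ∀ i, ∑ j, A i j = 1) (x y : n) :
    ∑ w, (∑' t : ℕ, γ ^ t * (A ^ t) x w) * ((1 - γ • A) w y)
      = if x = y then 1 else 0 := by
  have hle1 : ∀ t (i j : n), (A ^ t) i j ≤ 1 := by
    intro t i j
    calc (A ^ t) i j ≤ ∑ j', (A ^ t) i j' :=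
          Finset.single_le_sum (fun j' _ => (iocpg_stoch_pow A h0 h1 t).1 i j')
            (Finset.mem_univ j)
      _ = 1 := (iocpg_stoch_pow A h0 h1 t).2 i
  have hb : ∀ (i j : n) t, ‖γ ^ t * (A ^ t) i j‖ ≤ γ ^ t := by
    intro i j t
    rw [Real.norm_eq_abs, abs_mul, abs_of_nonneg (pow_nonneg hγ0 t),
      abs_of_nonneg ((iocpg_stoch_pow A h0 h1 t).1 i j)]
    nlinarith [pow_nonneg hγ0 t, hle1 t i j, (iocpg_stoch_pow A h0 h1 t).1 i j]
  have hsum : ∀ i j : n, Summable (fun t => γ ^ t * (A ^ t) i j) := fun i j =>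
    Summable.of_norm_bounded (summable_geometric_of_lt_one hγ0 hγ1) (hb i j)
  have step1 : ∀ w, (∑' t : ℕ, γ ^ t * (A ^ t) x w) * ((1 - γ • A) w y)
      = ∑' t : ℕ, γ ^ t * (A ^ t) x w * ((1 - γ • A) w y) := fun w => (tsum_mul_right).symm
  simp only [step1]
  rw [← Summable.tsum_finsetSum (fun w _ => (hsum x w).mul_right _)]
  have step2 : ∀ t : ℕ, ∑ w, γ ^ t * (A ^ t) x w * ((1 - γ • A) w y)
      = γ ^ t * (A ^ t) x y - γ ^ (t + 1) * (A ^ (t + 1)) x y := by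
    intro t
    simp only [Matrix.sub_apply, Matrix.one_apply, Matrix.smul_apply, smul_eq_mul,
      mul_sub, mul_ite, mul_one, mul_zero, Finset.sum_sub_distrib, Finset.sum_ite_eq,
      Finset.sum_ite_eq', Finset.mem_univ, if_true]
    congr 1
    rw [pow_succ A, Matrix.mul_apply, Finset.mul_sum, pow_succ γ]
    apply Finset.sum_congr rfl; intro w _
    ring
  simp only [step2]
  rw [Summable.tsum_sub (hsum x y) ((summable_nat_add_iff 1).mpr (hsum x y)),
    Summable.tsum_eq_zero_add (hsum x y)]
  simp [Matrix.one_apply]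

private lemma iocpg_diff_det {n : Type*} [Fintype n] [DecidableEq n] (B : ℝ → Matrix n n ℝ)
    (h : ∀ i j, Differentiable ℝ (fun z => B z i j)) :
    Differentiable ℝ (fun z => (B z).det) := by
  simp only [Matrix.det_apply, Units.smul_def, zsmul_eq_mul]
  apply Differentiable.fun_sum
  intro σ _
  exact Differentiable.const_mul (Differentiable.fun_finset_prod (fun i _ => h (σ i) i)) _

end Helpers

/-- **Theorem 1: interest-function policy gradient.** The gradient of the
expected discounted return with respect to the interest parameter `z` at `(s,ω)` is
`Σ_{(s̃,ω̃)} μ̂^z((s̃,ω̃)|(s,ω)) · γ Σ_a π_ω̃(a|s̃) Σ_{s'} P(s'|s̃,a) β_ω̃(s')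
  Σ_{ω'} (∂π_{I_z}(ω'|s')/∂z) Q_Ω^z(s',ω')`,
where `μ̂^z = Σ_t γ^t (P₁^z)^t` is the discounted weighting of state-option pairs. -/
theorem interest_option_critic_policy_gradient
    {S A Ω : Type*} [Fintype S] [Fintype A] [Fintype Ω]
    [DecidableEq S] [DecidableEq A] [DecidableEq Ω]
    [Nonempty S] [Nonempty A] [Nonempty Ω]
    (r : S → A → ℝ) (P : S → A → S → ℝ)
    (hP0 : ∀ s a s', 0 ≤ P s a s') (hP1 : ∀ s a, ∑ s', P s a s' = 1)
    (γ : ℝ) (hγ0 : 0 ≤ γ) (hγ1 : γ < 1)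
    (π : Ω → S → A → ℝ)
    (hπ0 : ∀ ω s a, 0 ≤ π ω s a) (hπ1 : ∀ ω s, ∑ a, π ω s a = 1)
    (β : Ω → S → ℝ) (hβ0 : ∀ ω s, 0 ≤ β ω s) (hβ1 : ∀ ω s, β ω s ≤ 1)
    (πΩ : S → Ω → ℝ)
    (hπΩ0 : ∀ s ω, 0 ≤ πΩ s ω) (hπΩ1 : ∀ s, ∑ ω, πΩ s ω = 1)
    (I : ℝ → S → Ω → ℝ)
    (hIdiff : ∀ s ω, Differentiable ℝ (fun z => I z s ω))
    (hI0 : ∀ z s ω, 0 ≤ I z s ω)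
    (hIpos : ∀ z s, 0 < ∑ ω, I z s ω * πΩ s ω)
    (πI : ℝ → S → Ω → ℝ)
    (hπI : ∀ z s ω, πI z s ω = I z s ω * πΩ s ω / ∑ ω', I z s ω' * πΩ s ω')
    (QU : ℝ → S → Ω → A → ℝ) (QΩ : ℝ → S → Ω → ℝ)
    (hQΩ : ∀ z s ω, QΩ z s ω = ∑ a, π ω s a * QU z s ω a)
    (hQU : ∀ z s ω a, QU z s ω a = r s a + γ * ∑ s', P s a s' *
      ((1 - β ω s') * QΩ z s' ω + β ω s' * ∑ ω', πI z s' ω' * QΩ z s' ω'))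
    (P₁ : ℝ → Matrix (S × Ω) (S × Ω) ℝ)
    (hP₁ : ∀ z s ω s' ω', P₁ z (s, ω) (s', ω') =
      ∑ a, π ω s a * P s a s' *
        ((1 - β ω s') * (if ω' = ω then 1 else 0) + β ω s' * πI z s' ω')) :
    ∀ z s ω,
      deriv (fun z => QΩ z s ω) z =
        ∑ x : S × Ω, (∑' t : ℕ, γ ^ t * (P₁ z ^ t) (s, ω) x) *
          (γ * ∑ a, π x.2 x.1 a * ∑ s', P x.1 a s' * (β x.2 s' *
            ∑ ω', deriv (fun z => πI z s' ω') z * QΩ z s' ω')) := by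
  -- basic facts about πI
  have hDpos : ∀ z s, (∑ ω', I z s ω' * πΩ s ω') ≠ 0 := fun z s => ne_of_gt (hIpos z s)
  have hπIfun : ∀ s ω, (fun z => πI z s ω)
      = fun z => (I z s ω * πΩ s ω) / ∑ ω', I z s ω' * πΩ s ω' :=
    fun s ω => funext fun z => hπI z s ω
  have hπIdiff : ∀ s ω, Differentiable ℝ (fun z => πI z s ω) := by
    intro s ω
    rw [hπIfun]
    exact Differentiable.div ((hIdiff s ω).mul_const _)
      (Differentiable.fun_sum fun ω' _ => (hIdiff s ω').mul_const _) (fun z => hDpos z s)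
  have hπI0 : ∀ z s ω, 0 ≤ πI z s ω := fun z s ω => by
    rw [hπI]
    exact div_nonneg (mul_nonneg (hI0 z s ω) (hπΩ0 s ω)) (le_of_lt (hIpos z s))
  have hπI1 : ∀ z s, ∑ ω, πI z s ω = 1 := fun z s => by
    simp only [hπI]
    rw [← Finset.sum_div]
    exact div_self (hDpos z s)
  -- facts about P₁
  have hP₁fun : ∀ (s : S) (ω : Ω) (s' : S) (ω' : Ω), (fun z => P₁ z (s, ω) (s', ω'))
      = fun z => ∑ a, π ω s a * P s a s' *
        ((1 - β ω s') * (if ω' = ω then 1 else 0) + β ω s' * πI z s' ω') :=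
    fun s ω s' ω' => funext fun z => hP₁ z s ω s' ω'
  have hP₁diff : ∀ (x y : S × Ω), Differentiable ℝ (fun z => P₁ z x y) := by
    rintro ⟨s, ω⟩ ⟨s', ω'⟩
    rw [hP₁fun]
    apply Differentiable.fun_sum; intro a _
    exact (((hπIdiff s' ω').const_mul _).const_add _).const_mul _
  have hP₁0 : ∀ z (x y : S × Ω), 0 ≤ P₁ z x y := by
    rintro z ⟨s, ω⟩ ⟨s', ω'⟩
    rw [hP₁]
    apply Finset.sum_nonneg; intro a _
    apply mul_nonneg (mul_nonneg (hπ0 ω s a) (hP0 s a s'))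
    apply add_nonneg
    · apply mul_nonneg (by linarith [hβ1 ω s']) (by positivity)
    · exact mul_nonneg (hβ0 ω s') (hπI0 z s' ω')
  have hP₁1 : ∀ z (x : S × Ω), ∑ y, P₁ z x y = 1 := by
    rintro z ⟨s, ω⟩
    rw [Fintype.sum_prod_type]
    have inner : ∀ (s' : S), ∑ ω', P₁ z (s, ω) (s', ω') = ∑ a, π ω s a * P s a s' := by
      intro s'
      simp only [hP₁]
      rw [Finset.sum_comm]
      apply Finset.sum_congr rfl; intro a _
      rw [← Finset.mul_sum]
      have h1 : ∑ ω', ((1 - β ω s') * (if ω' = ω then 1 else 0) + β ω s' * πI z s' ω')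
          = 1 := by
        rw [Finset.sum_add_distrib, ← Finset.mul_sum, ← Finset.mul_sum, hπI1]
        simp [Finset.sum_ite_eq, Finset.sum_ite_eq']
      rw [h1, mul_one]
    simp only [inner]
    rw [Finset.sum_comm]
    simp only [← Finset.mul_sum, hP1, mul_one]
    exact hπ1 ω s
  -- Bellman equation in vector form
  have hBell : ∀ z (x : S × Ω), QΩ z x.1 x.2 = (∑ a, π x.2 x.1 a * r x.1 a)
      + γ * ∑ y : S × Ω, P₁ z x y * QΩ z y.1 y.2 := by
    rintro z ⟨s, ω⟩
    have hP₁' : ∀ y : S × Ω, P₁ z (s, ω) y = ∑ a, π ω s a * P s a y.1 *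
        ((1 - β ω y.1) * (if y.2 = ω then 1 else 0) + β ω y.1 * πI z y.1 y.2) :=
      fun ⟨s', ω'⟩ => hP₁ z s ω s' ω'
    have hr : ∑ y : S × Ω, P₁ z (s, ω) y * QΩ z y.1 y.2
        = ∑ a, π ω s a * ∑ s', P s a s' * ((1 - β ω s') * QΩ z s' ω
          + β ω s' * ∑ ω', πI z s' ω' * QΩ z s' ω') := by
      simp only [hP₁']
      exact iocpg_sum_alg (fun a => π ω s a) (fun a s' => P s a s') (fun s' => β ω s')
        (fun s' ω' => πI z s' ω') (fun s' ω' => QΩ z s' ω') ω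
    rw [hQΩ]
    have expand : ∀ a, π ω s a * QU z s ω a = π ω s a * r s a
        + γ * (π ω s a * ∑ s', P s a s' * ((1 - β ω s') * QΩ z s' ω
          + β ω s' * ∑ ω', πI z s' ω' * QΩ z s' ω')) := by
      intro a; rw [hQU]; ring
    simp only [expand, Finset.sum_add_distrib, ← Finset.mul_sum]
    rw [hr]
  -- invertibility of 1 - γ • P₁ z
  have hMunit : ∀ z, IsUnit (1 - γ • P₁ z) := by
    intro z
    rw [← Matrix.mulVec_injective_iff_isUnit]
    have key : ∀ u : S × Ω → ℝ, (1 - γ • P₁ z).mulVec u = 0 → u = 0 := by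
      intro u hu
      by_contra hne
      obtain ⟨x0, _, hx0⟩ := Finset.exists_max_image Finset.univ (fun x => |u x|)
        ⟨Classical.arbitrary _, Finset.mem_univ _⟩
      have hpos : 0 < |u x0| := by
        rcases Function.ne_iff.mp hne with ⟨x, hx⟩
        exact lt_of_lt_of_le (abs_pos.mpr hx) (hx0 x (Finset.mem_univ x))
      have he : u x0 = γ * ∑ y, P₁ z x0 y * u y := by
        have h := congrFun hu x0
        simp only [Matrix.mulVec, dotProduct, Matrix.sub_apply, Matrix.one_apply,
          Matrix.smul_apply, smul_eq_mul, sub_mul, ite_mul, one_mul, zero_mul,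
          Finset.sum_sub_distrib, Finset.sum_ite_eq, Finset.sum_ite_eq', Finset.mem_univ,
          if_true, mul_assoc, ← Finset.mul_sum, Pi.zero_apply] at h
        linarith [h]
      have hle : |u x0| ≤ γ * |u x0| := by
        calc |u x0| = γ * |∑ y, P₁ z x0 y * u y| := by
              rw [he, abs_mul, abs_of_nonneg hγ0]
          _ ≤ γ * ∑ y, P₁ z x0 y * |u x0| := by
              apply mul_le_mul_of_nonneg_left _ hγ0
              calc |∑ y, P₁ z x0 y * u y| ≤ ∑ y, |P₁ z x0 y * u y| :=
                    Finset.abs_sum_le_sum_abs _ _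
                _ ≤ ∑ y, P₁ z x0 y * |u x0| := by
                    apply Finset.sum_le_sum; intro y _
                    rw [abs_mul, abs_of_nonneg (hP₁0 z x0 y)]
                    exact mul_le_mul_of_nonneg_left (hx0 y (Finset.mem_univ y))
                      (hP₁0 z x0 y)
          _ = γ * |u x0| := by rw [← Finset.sum_mul, hP₁1 z x0, one_mul]
      nlinarith
    intro v w hvw
    have h0 : (1 - γ • P₁ z).mulVec (v - w) = 0 := by
      rw [Matrix.mulVec_sub, hvw, sub_self]
    exact sub_eq_zero.mp (key _ h0)
  have hdetU : ∀ z, IsUnit (1 - γ • P₁ z).det := fun z =>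
    (Matrix.isUnit_iff_isUnit_det _).mp (hMunit z)
  have hdet : ∀ z, (1 - γ • P₁ z).det ≠ 0 := fun z => IsUnit.ne_zero (hdetU z)
  -- differentiability of entries of 1 - γ • P₁ z
  have hMdiff : ∀ x y : S × Ω, Differentiable ℝ (fun z => (1 - γ • P₁ z) x y) := by
    intro x y
    have h : (fun z => (1 - γ • P₁ z) x y)
        = fun z => (1 : Matrix (S × Ω) (S × Ω) ℝ) x y - γ * P₁ z x y := by
      funext z
      simp [Matrix.sub_apply, Matrix.smul_apply, smul_eq_mul]
    rw [h]
    exact ((hP₁diff x y).const_mul γ).const_sub _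
  -- differentiability of QΩ
  have hQdiff : ∀ (s : S) (ω : Ω), Differentiable ℝ (fun z => QΩ z s ω) := by
    intro s ω
    have hqe : ∀ z, QΩ z s ω = ((1 - γ • P₁ z).det)⁻¹ *
        ∑ y : S × Ω, (1 - γ • P₁ z).adjugate (s, ω) y * (∑ a, π y.2 y.1 a * r y.1 a) := by
      intro z
      have hMq : (1 - γ • P₁ z).mulVec (fun y : S × Ω => QΩ z y.1 y.2)
          = fun x : S × Ω => ∑ a, π x.2 x.1 a * r x.1 a := by
        funext x
        have hb := hBell z x
        simp only [Matrix.mulVec, dotProduct, Matrix.sub_apply, Matrix.one_apply,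
          Matrix.smul_apply, smul_eq_mul, sub_mul, ite_mul, one_mul, zero_mul,
          Finset.sum_sub_distrib, Finset.sum_ite_eq, Finset.sum_ite_eq', Finset.mem_univ,
          if_true, mul_assoc, ← Finset.mul_sum]
        linarith [hb]
      have h2 := congrArg (fun v => ((1 - γ • P₁ z)⁻¹).mulVec v) hMq
      simp only [Matrix.mulVec_mulVec, Matrix.nonsing_inv_mul _ (hdetU z),
        Matrix.one_mulVec] at h2
      have hx := congrFun h2 (s, ω)
      rw [hx, Matrix.inv_def, Ring.inverse_eq_inv']
      simp only [Matrix.mulVec, dotProduct, Matrix.smul_apply, smul_eq_mul,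
        Finset.mul_sum, mul_assoc]
    have hfun : (fun z => QΩ z s ω) = fun z => ((1 - γ • P₁ z).det)⁻¹ *
        ∑ y : S × Ω, (1 - γ • P₁ z).adjugate (s, ω) y * (∑ a, π y.2 y.1 a * r y.1 a) :=
      funext hqe
    rw [hfun]
    apply Differentiable.mul
    · exact Differentiable.inv (iocpg_diff_det _ hMdiff) hdet
    · apply Differentiable.fun_sum; intro y _
      apply Differentiable.mul_const
      have hadj : (fun z => (1 - γ • P₁ z).adjugate (s, ω) y)
          = fun z => ((1 - γ • P₁ z).updateRow y (Pi.single (s, ω) 1)).det :=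
        funext fun z => Matrix.adjugate_apply _ _ _
      rw [hadj]
      apply iocpg_diff_det
      intro i j
      rcases eq_or_ne i y with h | h
      · simp only [Matrix.updateRow_apply, h, if_true]
        exact differentiable_const _
      · simp only [Matrix.updateRow_apply, h, if_false]
        exact hMdiff i j
  -- main computation
  intro z0 s0 ω0
  -- derivative of P₁ entries
  have hP₁deriv : ∀ (x y : S × Ω), HasDerivAt (fun z => P₁ z x y)
      (∑ a, π x.2 x.1 a * P x.1 a y.1 * (β x.2 y.1 * deriv (fun z => πI z y.1 y.2) z0)) z0 := by
    rintro ⟨s, ω⟩ ⟨s', ω'⟩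
    rw [hP₁fun]
    apply HasDerivAt.fun_sum
    intro a _
    have h1 : HasDerivAt (fun z => πI z s' ω') (deriv (fun z => πI z s' ω') z0) z0 :=
      ((hπIdiff s' ω') z0).hasDerivAt
    have h2 := (((h1.const_mul (β ω s')).const_add
      ((1 - β ω s') * (if ω' = ω then 1 else 0))).const_mul (π ω s a * P s a s'))
    exact h2
  -- derivative of the Bellman identity
  have hkey : ∀ x : S × Ω, deriv (fun z => QΩ z x.1 x.2) z0
      = γ * ∑ y : S × Ω,
        ((∑ a, π x.2 x.1 a * P x.1 a y.1 * (β x.2 y.1 * deriv (fun z => πI z y.1 y.2) z0))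
            * QΩ z0 y.1 y.2
          + P₁ z0 x y * deriv (fun z => QΩ z y.1 y.2) z0) := by
    intro x
    have hfun : (fun z => QΩ z x.1 x.2) = fun z => (∑ a, π x.2 x.1 a * r x.1 a)
        + γ * ∑ y : S × Ω, P₁ z x y * QΩ z y.1 y.2 := funext fun z => hBell z x
    have hR : HasDerivAt (fun z => (∑ a, π x.2 x.1 a * r x.1 a)
        + γ * ∑ y : S × Ω, P₁ z x y * QΩ z y.1 y.2)
        (γ * ∑ y : S × Ω,
          ((∑ a, π x.2 x.1 a * P x.1 a y.1 * (β x.2 y.1 * deriv (fun z => πI z y.1 y.2) z0))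
              * QΩ z0 y.1 y.2
            + P₁ z0 x y * deriv (fun z => QΩ z y.1 y.2) z0)) z0 := by
      apply HasDerivAt.const_add
      apply HasDerivAt.const_mul
      apply HasDerivAt.fun_sum
      intro y _
      exact (hP₁deriv x y).mul ((hQdiff y.1 y.2 z0).hasDerivAt)
    rw [hfun]
    exact hR.deriv
  -- linear system for the derivative
  have hsys : ∀ x : S × Ω, ∑ y, ((1 - γ • P₁ z0) x y) * deriv (fun z => QΩ z y.1 y.2) z0
      = γ * ∑ a, π x.2 x.1 a * ∑ s', P x.1 a s' * (β x.2 s' *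
          ∑ ω', deriv (fun z => πI z s' ω') z0 * QΩ z0 s' ω') := by
    intro x
    have h1 := hkey x
    rw [Finset.sum_add_distrib, mul_add] at h1
    have h2 := iocpg_sum_alg2 (fun a => π x.2 x.1 a) (fun a s' => P x.1 a s')
      (fun s' => β x.2 s') (fun s' ω' => deriv (fun z => πI z s' ω') z0)
      (fun s' ω' => QΩ z0 s' ω') γ
    simp only [Matrix.sub_apply, Matrix.one_apply, Matrix.smul_apply, smul_eq_mul, sub_mul,
      ite_mul, one_mul, zero_mul, Finset.sum_sub_distrib, Finset.sum_ite_eq,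
      Finset.sum_ite_eq', Finset.mem_univ, if_true, mul_assoc, ← Finset.mul_sum]
    have h3 : ∑ ω', deriv (fun z => πI z x.1 ω') z0 * QΩ z0 x.1 ω'
        = ∑ ω', deriv (fun z => πI z x.1 ω') z0 * QΩ z0 x.1 ω' := rfl
    linarith [h1, h2]
  -- combine with the geometric series inverse
  have hmu := fun y => iocpg_mu_inv (P₁ z0) γ hγ0 hγ1 (hP₁0 z0) (hP₁1 z0) (s0, ω0) y
  calc deriv (fun z => QΩ z s0 ω0) z0
      = deriv (fun z => QΩ z (s0, ω0).1 (s0, ω0).2) z0 := rfl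
    _ = ∑ y : S × Ω, (if (s0, ω0) = y then 1 else 0) * deriv (fun z => QΩ z y.1 y.2) z0 := by
        simp [Finset.sum_ite_eq, Finset.sum_ite_eq']
    _ = ∑ y : S × Ω, (∑ x : S × Ω, (∑' t : ℕ, γ ^ t * (P₁ z0 ^ t) (s0, ω0) x)
          * ((1 - γ • P₁ z0) x y)) * deriv (fun z => QΩ z y.1 y.2) z0 := by
        apply Finset.sum_congr rfl; intro y _
        rw [hmu y]
    _ = ∑ x : S × Ω, (∑' t : ℕ, γ ^ t * (P₁ z0 ^ t) (s0, ω0) x)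
          * ∑ y : S × Ω, ((1 - γ • P₁ z0) x y) * deriv (fun z => QΩ z y.1 y.2) z0 := by
        simp only [Finset.sum_mul]
        rw [Finset.sum_comm]
        apply Finset.sum_congr rfl; intro x _
        simp only [Finset.mul_sum]
        apply Finset.sum_congr rfl; intro y _
        ring
    _ = ∑ x : S × Ω, (∑' t : ℕ, γ ^ t * (P₁ z0 ^ t) (s0, ω0) x) *
          (γ * ∑ a, π x.2 x.1 a * ∑ s', P x.1 a s' * (β x.2 s' *
            ∑ ω', deriv (fun z => πI z s' ω') z0 * QΩ z0 s' ω')) := by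
        apply Finset.sum_congr rfl; intro x _
        rw [hsys x]
end

section
/- (Intra-option policy gradient under the interest policy over options.) Consider a finite MDP with options with a fixed interest policy over options π_I, in which the intra-option policies are parameterized: for each option ω, π_{ω,θ} : ℝ × S × A → ℝ with θ ↦ π_{ω,θ}(a|s) differentiable for every (s,a), π_{ω,θ}(a|s) ≥ 0 and Σ_a π_{ω,θ}(a|s) = 1 for all θ; write Q_Ω^θ and Q_U^θ for the corresponding option-value functions, P₁^θ((s',ω')|(s,ω)) = Σ_a π_{ω,θ}(a|s) P(s'|s,a) [ (1−β_ω(s')) 1{ω'=ω} + β_ω(s') π_I(ω'|s') ] for the augmented transition kernel over state-option pairs, and μ̂^θ((s̃,ω̃)|(s,ω)) = Σ_{t=0}^∞ γ^t (P₁^θ)^t((s̃,ω̃)|(s,ω)) for the discounted weighting of state-option pairs along trajectories starting from (s,ω). Then the gradient of the expected discounted return with respect to θ at (s,ω) is: ∂Q_Ω^θ(s,ω)/∂θ = Σ_{(s̃,ω̃)} μ̂^θ((s̃,ω̃)|(s,ω)) Σ_a (∂π_{ω̃,θ}(a|s̃)/∂θ) Q_U^θ(s̃,ω̃,a). -/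
open Matrix

lemma stoch_pow {ι : Type*} [Fintype ι] [DecidableEq ι] (Q : Matrix ι ι ℝ)
    (h0 : ∀ x y, 0 ≤ Q x y) (h1 : ∀ x, ∑ y, Q x y = 1) (t : ℕ) :
    (∀ x y, 0 ≤ (Q ^ t) x y) ∧ (∀ x, ∑ y, (Q ^ t) x y = 1) := by
  induction t with
  | zero =>
    refine ⟨fun x y => ?_, fun x => ?_⟩
    · rw [pow_zero]
      by_cases h : x = y <;> simp [Matrix.one_apply, h]
    · rw [pow_zero]
      simp [Matrix.one_apply]
  | succ n ih =>
    refine ⟨fun x y => ?_, fun x => ?_⟩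
    · rw [pow_succ, Matrix.mul_apply]
      exact Finset.sum_nonneg fun z _ => mul_nonneg (ih.1 x z) (h0 z y)
    · simp only [pow_succ, Matrix.mul_apply]
      rw [Finset.sum_comm]
      simp_rw [← Finset.mul_sum, h1]
      simpa using ih.2 x

lemma stoch_summable {ι : Type*} [Fintype ι] [DecidableEq ι] (Q : Matrix ι ι ℝ)
    (h0 : ∀ x y, 0 ≤ Q x y) (h1 : ∀ x, ∑ y, Q x y = 1)
    {γ : ℝ} (hγ0 : 0 ≤ γ) (hγ1 : γ < 1) (x y : ι) :
    Summable (fun t : ℕ => γ ^ t * (Q ^ t) x y) := by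
  apply Summable.of_norm_bounded (summable_geometric_of_lt_one hγ0 hγ1)
  intro t
  have hle : (Q ^ t) x y ≤ 1 := by
    calc (Q ^ t) x y ≤ ∑ z, (Q ^ t) x z :=
      Finset.single_le_sum (fun z _ => (stoch_pow Q h0 h1 t).1 x z) (Finset.mem_univ y)
    _ = 1 := (stoch_pow Q h0 h1 t).2 x
  have hge := (stoch_pow Q h0 h1 t).1 x y
  rw [Real.norm_eq_abs, abs_mul, abs_of_nonneg (pow_nonneg hγ0 t), abs_of_nonneg hge]
  calc γ ^ t * (Q ^ t) x y ≤ γ ^ t * 1 :=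
        mul_le_mul_of_nonneg_left hle (pow_nonneg hγ0 t)
    _ = γ ^ t := mul_one _

lemma neumann_right_inv {ι : Type*} [Fintype ι] [DecidableEq ι] (Q : Matrix ι ι ℝ)
    (h0 : ∀ x y, 0 ≤ Q x y) (h1 : ∀ x, ∑ y, Q x y = 1)
    {γ : ℝ} (hγ0 : 0 ≤ γ) (hγ1 : γ < 1) :
    (1 - γ • Q) * Matrix.of (fun x y => ∑' t : ℕ, γ ^ t * (Q ^ t) x y) = 1 := by
  have hsum : ∀ z w, Summable (fun t : ℕ => γ ^ t * (Q ^ t) z w) :=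
    fun z w => stoch_summable Q h0 h1 hγ0 hγ1 z w
  ext x y
  rw [Matrix.sub_mul, Matrix.one_mul, Matrix.smul_mul, Matrix.sub_apply, Matrix.smul_apply,
    Matrix.mul_apply]
  simp only [Matrix.of_apply]
  have key : ∑ z, Q x z * ∑' t : ℕ, γ ^ t * (Q ^ t) z y
      = ∑' t : ℕ, γ ^ t * (Q ^ (t+1)) x y := by
    calc ∑ z, Q x z * ∑' t : ℕ, γ ^ t * (Q ^ t) z y
        = ∑ z, ∑' t : ℕ, Q x z * (γ ^ t * (Q ^ t) z y) := by
          simp_rw [← tsum_mul_left]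
      _ = ∑' t : ℕ, ∑ z, Q x z * (γ ^ t * (Q ^ t) z y) :=
          (Summable.tsum_finsetSum (fun z _ => (hsum z y).mul_left _)).symm
      _ = ∑' t : ℕ, γ ^ t * (Q ^ (t+1)) x y := by
          congr 1; ext t
          rw [pow_succ', Matrix.mul_apply, Finset.mul_sum]
          congr 1; ext z; ring
  rw [key]
  have h2 : ∑' t : ℕ, γ ^ t * (Q ^ t) x y
      = γ ^ 0 * (Q ^ 0) x y + ∑' t : ℕ, γ ^ (t+1) * (Q ^ (t+1)) x y :=
    Summable.tsum_eq_zero_add (hsum x y)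
  have h3 : γ • ∑' t : ℕ, γ ^ t * (Q ^ (t+1)) x y
      = ∑' t : ℕ, γ ^ (t+1) * (Q ^ (t+1)) x y := by
    rw [smul_eq_mul, ← tsum_mul_left]
    congr 1; ext t; ring
  rw [h3, h2]
  simp [Matrix.one_apply]

lemma diff_finset_prod {ι : Type*} (s : Finset ι) (f : ι → ℝ → ℝ)
    (hf : ∀ i, Differentiable ℝ (f i)) :
    Differentiable ℝ (fun θ => ∏ i ∈ s, f i θ) := by
  classical
  induction s using Finset.induction with
  | empty => simp only [Finset.prod_empty]; exact differentiable_const 1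
  | insert _ _ hx ih =>
    simp only [Finset.prod_insert hx]
    exact (hf _).mul ih

lemma diff_det {ι : Type*} [Fintype ι] [DecidableEq ι] (B : ℝ → Matrix ι ι ℝ)
    (hB : ∀ i j, Differentiable ℝ (fun θ => B θ i j)) :
    Differentiable ℝ (fun θ => (B θ).det) := by
  have : (fun θ => (B θ).det)
      = fun θ => ∑ σ : Equiv.Perm ι, (Equiv.Perm.sign σ : ℝ) * ∏ i, B θ (σ i) i := by
    ext θ; rw [Matrix.det_apply']
  rw [this]
  apply Differentiable.fun_sum
  intro σ _
  exact (diff_finset_prod _ _ (fun i => hB (σ i) i)).const_mul _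

lemma diff_inv_entry {ι : Type*} [Fintype ι] [DecidableEq ι] (B : ℝ → Matrix ι ι ℝ)
    (hB : ∀ i j, Differentiable ℝ (fun θ => B θ i j))
    (hdet : ∀ θ, (B θ).det ≠ 0) (i j : ι) :
    Differentiable ℝ (fun θ => (B θ)⁻¹ i j) := by
  have hadj : Differentiable ℝ (fun θ => (B θ).adjugate i j) := by
    have : (fun θ => (B θ).adjugate i j)
        = fun θ => ((B θ).updateRow j (Pi.single i 1)).det := by
      ext θ; rw [Matrix.adjugate_apply]
    rw [this]
    apply diff_det
    intro k l
    by_cases h : k = j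
    · subst h; simp only [Matrix.updateRow_self]; exact differentiable_const _
    · simp only [Matrix.updateRow_apply, if_neg h]; exact hB k l
  have : (fun θ => (B θ)⁻¹ i j) = fun θ => ((B θ).det)⁻¹ * (B θ).adjugate i j := by
    ext θ
    rw [Matrix.inv_def, Matrix.smul_apply, Ring.inverse_eq_inv', smul_eq_mul]
  rw [this]
  exact ((diff_det B hB).inv hdet).mul hadj



/-- **intra-option policy gradient under the interest policy over options.**
With a fixed interest policy over options `πI` and intra-option policies parameterized by
`θ`, the gradient of the expected discounted return with respect to `θ` at `(s,ω)` is
`Σ_{(s̃,ω̃)} μ̂^θ((s̃,ω̃)|(s,ω)) Σ_a (∂π_{ω̃,θ}(a|s̃)/∂θ) Q_U^θ(s̃,ω̃,a)`. -/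
theorem intra_option_policy_gradient_under_interest_policy
    {S A Ω : Type*} [Fintype S] [Fintype A] [Fintype Ω]
    [DecidableEq S] [DecidableEq A] [DecidableEq Ω]
    [Nonempty S] [Nonempty A] [Nonempty Ω]
    (r : S → A → ℝ) (P : S → A → S → ℝ)
    (hP0 : ∀ s a s', 0 ≤ P s a s') (hP1 : ∀ s a, ∑ s', P s a s' = 1)
    (γ : ℝ) (hγ0 : 0 ≤ γ) (hγ1 : γ < 1)
    (π : ℝ → Ω → S → A → ℝ)
    (hπdiff : ∀ ω s a, Differentiable ℝ (fun θ => π θ ω s a))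
    (hπ0 : ∀ θ ω s a, 0 ≤ π θ ω s a) (hπ1 : ∀ θ ω s, ∑ a, π θ ω s a = 1)
    (β : Ω → S → ℝ) (hβ0 : ∀ ω s, 0 ≤ β ω s) (hβ1 : ∀ ω s, β ω s ≤ 1)
    (πΩ : S → Ω → ℝ)
    (hπΩ0 : ∀ s ω, 0 ≤ πΩ s ω) (hπΩ1 : ∀ s, ∑ ω, πΩ s ω = 1)
    (I : S → Ω → ℝ) (hI0 : ∀ s ω, 0 ≤ I s ω)
    (hIpos : ∀ s, 0 < ∑ ω, I s ω * πΩ s ω)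
    (πI : S → Ω → ℝ)
    (hπI : ∀ s ω, πI s ω = I s ω * πΩ s ω / ∑ ω', I s ω' * πΩ s ω')
    (QU : ℝ → S → Ω → A → ℝ) (QΩ : ℝ → S → Ω → ℝ)
    (hQΩ : ∀ θ s ω, QΩ θ s ω = ∑ a, π θ ω s a * QU θ s ω a)
    (hQU : ∀ θ s ω a, QU θ s ω a = r s a + γ * ∑ s', P s a s' *
      ((1 - β ω s') * QΩ θ s' ω + β ω s' * ∑ ω', πI s' ω' * QΩ θ s' ω'))
    (P₁ : ℝ → Matrix (S × Ω) (S × Ω) ℝ)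
    (hP₁ : ∀ θ s ω s' ω', P₁ θ (s, ω) (s', ω') =
      ∑ a, π θ ω s a * P s a s' *
        ((1 - β ω s') * (if ω' = ω then 1 else 0) + β ω s' * πI s' ω')) :
    ∀ θ s ω,
      deriv (fun θ => QΩ θ s ω) θ =
        ∑ x : S × Ω, (∑' t : ℕ, γ ^ t * (P₁ θ ^ t) (s, ω) x) *
          ∑ a, deriv (fun θ => π θ x.2 x.1 a) θ * QU θ x.1 x.2 a := by
  -- πI facts
  have hπI0 : ∀ s ω, 0 ≤ πI s ω := fun s ω => by
    rw [hπI]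
    exact div_nonneg (mul_nonneg (hI0 s ω) (hπΩ0 s ω)) (hIpos s).le
  have hπI1 : ∀ s, ∑ ω, πI s ω = 1 := fun s => by
    simp_rw [hπI]
    rw [← Finset.sum_div]
    exact div_self (hIpos s).ne'
  -- P₁ facts
  have hP₁0 : ∀ θ (x y : S × Ω), 0 ≤ P₁ θ x y := by
    rintro θ ⟨s, ω⟩ ⟨s', ω'⟩
    rw [hP₁]
    apply Finset.sum_nonneg
    intro a _
    apply mul_nonneg (mul_nonneg (hπ0 θ ω s a) (hP0 s a s'))
    apply add_nonneg
    · apply mul_nonneg (by linarith [hβ1 ω s'])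
      split <;> norm_num
    · exact mul_nonneg (hβ0 ω s') (hπI0 s' ω')
  have hP₁1 : ∀ θ (x : S × Ω), ∑ y, P₁ θ x y = 1 := by
    rintro θ ⟨s, ω⟩
    rw [Fintype.sum_prod_type]
    have : ∀ s', ∑ ω', P₁ θ (s, ω) (s', ω') = ∑ a, π θ ω s a * P s a s' := by
      intro s'
      simp_rw [hP₁]
      rw [Finset.sum_comm]
      congr 1; ext a
      rw [← Finset.mul_sum]
      have : ∑ ω', ((1 - β ω s') * (if ω' = ω then 1 else 0) + β ω s' * πI s' ω')
          = 1 := by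
        rw [Finset.sum_add_distrib]
        simp_rw [mul_ite, mul_one, mul_zero, ← Finset.mul_sum]
        rw [Finset.sum_ite_eq' Finset.univ ω (fun _ => (1 - β ω s'))]
        simp [hπI1 s']
      rw [this, mul_one]
    simp_rw [this]
    rw [Finset.sum_comm]
    simp_rw [← Finset.mul_sum, hP1]
    simpa using hπ1 θ ω s
  -- key rearrangement
  have hkey : ∀ θ (v : S × Ω → ℝ) s ω, ∑ y : S × Ω, P₁ θ (s, ω) y * v y
      = ∑ a, π θ ω s a * ∑ s', P s a s' *
          ((1 - β ω s') * v (s', ω) + β ω s' * ∑ ω', πI s' ω' * v (s', ω')) := by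
    intro θ v s ω
    rw [Fintype.sum_prod_type]
    have inner : ∀ s', ∑ ω', P₁ θ (s, ω) (s', ω') * v (s', ω')
        = ∑ a, π θ ω s a * (P s a s' *
            ((1 - β ω s') * v (s', ω) + β ω s' * ∑ ω', πI s' ω' * v (s', ω'))) := by
      intro s'
      simp_rw [hP₁, Finset.sum_mul]
      rw [Finset.sum_comm]
      congr 1; ext a
      have hterm : ∀ x, π θ ω s a * P s a s' *
            ((1 - β ω s') * (if x = ω then 1 else 0) + β ω s' * πI s' x) * v (s', x)
          = π θ ω s a * (P s a s' *
            (((1 - β ω s') * (if x = ω then 1 else 0) + β ω s' * πI s' x) * v (s', x))) := by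
        intro x; ring
      simp_rw [hterm, ← Finset.mul_sum]
      congr 2
      have : ∀ x, ((1 - β ω s') * (if x = ω then 1 else 0) + β ω s' * πI s' x) * v (s', x)
          = (1 - β ω s') * ((if x = ω then 1 else 0) * v (s', x))
            + β ω s' * (πI s' x * v (s', x)) := by intro x; ring
      simp_rw [this]
      rw [Finset.sum_add_distrib, ← Finset.mul_sum, ← Finset.mul_sum]
      congr 2
      simp_rw [ite_mul, one_mul, zero_mul]
      rw [Finset.sum_ite_eq' Finset.univ ω (fun x => v (s', x))]
      simp
    simp_rw [inner]
    rw [Finset.sum_comm]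
    congr 1; ext a
    rw [← Finset.mul_sum]
  -- Bellman in vector form
  have hBell : ∀ θ (x : S × Ω), QΩ θ x.1 x.2
      = (∑ a, π θ x.2 x.1 a * r x.1 a) + γ * ∑ y : S × Ω, P₁ θ x y * QΩ θ y.1 y.2 := by
    rintro θ ⟨s, ω⟩
    rw [hkey θ (fun y => QΩ θ y.1 y.2) s ω, hQΩ]
    simp only
    rw [Finset.mul_sum, ← Finset.sum_add_distrib]
    congr 1; ext a
    rw [hQU]
    ring
  -- matrix facts
  have hMN : ∀ θ, (1 - γ • P₁ θ) *
      Matrix.of (fun x y => ∑' t : ℕ, γ ^ t * (P₁ θ ^ t) x y) = 1 :=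
    fun θ => neumann_right_inv (P₁ θ) (hP₁0 θ) (hP₁1 θ) hγ0 hγ1
  have hdet : ∀ θ, IsUnit (1 - γ • P₁ θ).det :=
    fun θ => Matrix.isUnit_det_of_right_inverse (hMN θ)
  have hMinv : ∀ θ, (1 - γ • P₁ θ)⁻¹
      = Matrix.of (fun x y => ∑' t : ℕ, γ ^ t * (P₁ θ ^ t) x y) :=
    fun θ => Matrix.inv_eq_right_inv (hMN θ)
  -- M *ᵥ q = R
  have hMvq : ∀ θ, (1 - γ • P₁ θ) *ᵥ (fun x : S × Ω => QΩ θ x.1 x.2)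
      = fun x : S × Ω => ∑ a, π θ x.2 x.1 a * r x.1 a := by
    intro θ
    funext x
    rw [Matrix.sub_mulVec, Matrix.one_mulVec]
    have : (γ • P₁ θ) *ᵥ (fun x : S × Ω => QΩ θ x.1 x.2)
        = γ • (P₁ θ *ᵥ fun x : S × Ω => QΩ θ x.1 x.2) := by
      rw [Matrix.smul_mulVec]
    rw [this]
    have hmv : (P₁ θ *ᵥ fun y : S × Ω => QΩ θ y.1 y.2) x
        = ∑ y : S × Ω, P₁ θ x y * QΩ θ y.1 y.2 := by
      simp [Matrix.mulVec, dotProduct]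
    simp only [Pi.sub_apply, Pi.smul_apply, smul_eq_mul, hmv]
    have := hBell θ x
    linarith
  -- q = N *ᵥ R
  have hq_eq : ∀ θ (x : S × Ω), QΩ θ x.1 x.2
      = ∑ y : S × Ω, (∑' t : ℕ, γ ^ t * (P₁ θ ^ t) x y) *
          ∑ a, π θ y.2 y.1 a * r y.1 a := by
    intro θ x
    have h1 : (1 - γ • P₁ θ)⁻¹ *ᵥ ((1 - γ • P₁ θ) *ᵥ (fun x : S × Ω => QΩ θ x.1 x.2))
        = fun x : S × Ω => QΩ θ x.1 x.2 := by
      rw [Matrix.mulVec_mulVec, Matrix.nonsing_inv_mul _ (hdet θ), Matrix.one_mulVec]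
    rw [hMvq θ, hMinv θ] at h1
    have := congrFun h1 x
    rw [← this]
    simp [Matrix.mulVec, dotProduct]
  -- differentiability
  have hP₁diff : ∀ (x y : S × Ω), Differentiable ℝ (fun θ => P₁ θ x y) := by
    rintro ⟨s, ω⟩ ⟨s', ω'⟩
    have : (fun θ => P₁ θ (s, ω) (s', ω'))
        = fun θ => ∑ a, π θ ω s a * P s a s' *
            ((1 - β ω s') * (if ω' = ω then 1 else 0) + β ω s' * πI s' ω') :=
      funext fun θ => hP₁ θ s ω s' ω'
    rw [this]
    exact Differentiable.fun_sum fun a _ => ((hπdiff ω s a).mul_const _).mul_const _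
  have hMdiff : ∀ (x y : S × Ω), Differentiable ℝ (fun θ => (1 - γ • P₁ θ) x y) := by
    intro x y
    have : (fun θ => (1 - γ • P₁ θ) x y)
        = fun θ => (1 : Matrix (S × Ω) (S × Ω) ℝ) x y - γ * P₁ θ x y := by
      funext θ; simp [Matrix.sub_apply, Matrix.smul_apply]
    rw [this]
    exact (differentiable_const _).sub ((hP₁diff x y).const_mul γ)
  have hNdiff : ∀ (x y : S × Ω),
      Differentiable ℝ (fun θ => (1 - γ • P₁ θ)⁻¹ x y) :=
    fun x y => diff_inv_entry (fun θ => 1 - γ • P₁ θ) hMdiff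
      (fun θ => (hdet θ).ne_zero) x y
  have hqdiff : ∀ (x : S × Ω), Differentiable ℝ (fun θ => QΩ θ x.1 x.2) := by
    intro x
    have : (fun θ => QΩ θ x.1 x.2)
        = fun θ => ∑ y : S × Ω, (1 - γ • P₁ θ)⁻¹ x y *
            ∑ a, π θ y.2 y.1 a * r y.1 a := by
      funext θ
      rw [hq_eq θ x]
      congr 1; ext y
      rw [hMinv θ]
      rfl
    rw [this]
    exact Differentiable.fun_sum fun y _ => (hNdiff x y).mul
      (Differentiable.fun_sum fun a _ => (hπdiff y.2 y.1 a).mul_const _)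
  intro θ s ω
  set d : S × Ω → ℝ := fun x => deriv (fun θ' => QΩ θ' x.1 x.2) θ with hd_def
  set g : S × Ω → ℝ := fun x =>
    ∑ a, deriv (fun θ' => π θ' x.2 x.1 a) θ * QU θ x.1 x.2 a with hg_def
  have hqd : ∀ (x : S × Ω), HasDerivAt (fun θ' => QΩ θ' x.1 x.2) (d x) θ :=
    fun x => ((hqdiff x) θ).hasDerivAt
  have hQU' : ∀ (x : S × Ω) a, HasDerivAt (fun θ' => QU θ' x.1 x.2 a)
      (γ * ∑ s', P x.1 a s' * ((1 - β x.2 s') * d (s', x.2)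
        + β x.2 s' * ∑ ω', πI s' ω' * d (s', ω'))) θ := by
    rintro ⟨s₀, ω₀⟩ a
    have heq : (fun θ' => QU θ' s₀ ω₀ a)
        = fun θ' => r s₀ a + γ * ∑ s', P s₀ a s' *
            ((1 - β ω₀ s') * QΩ θ' s' ω₀ + β ω₀ s' * ∑ ω', πI s' ω' * QΩ θ' s' ω') :=
      funext fun θ' => hQU θ' s₀ ω₀ a
    rw [heq]
    apply HasDerivAt.const_add
    apply HasDerivAt.const_mul
    apply HasDerivAt.fun_sum
    intro s' _
    apply HasDerivAt.const_mul
    apply HasDerivAt.add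
    · exact (hqd (s', ω₀)).const_mul _
    · apply HasDerivAt.const_mul
      apply HasDerivAt.fun_sum
      intro ω' _
      exact (hqd (s', ω')).const_mul _
  have hQΩ' : ∀ (x : S × Ω), HasDerivAt (fun θ' => QΩ θ' x.1 x.2)
      (∑ a, (deriv (fun θ' => π θ' x.2 x.1 a) θ * QU θ x.1 x.2 a
        + π θ x.2 x.1 a * (γ * ∑ s', P x.1 a s' * ((1 - β x.2 s') * d (s', x.2)
          + β x.2 s' * ∑ ω', πI s' ω' * d (s', ω'))))) θ := by
    intro x
    have heq : (fun θ' => QΩ θ' x.1 x.2)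
        = fun θ' => ∑ a, π θ' x.2 x.1 a * QU θ' x.1 x.2 a :=
      funext fun θ' => hQΩ θ' x.1 x.2
    rw [heq]
    apply HasDerivAt.fun_sum
    intro a _
    exact (((hπdiff x.2 x.1 a) θ).hasDerivAt).mul (hQU' x a)
  have hd_bell : ∀ (x : S × Ω), d x = g x + γ * ∑ y : S × Ω, P₁ θ x y * d y := by
    intro x
    have h1 : d x = ∑ a, (deriv (fun θ' => π θ' x.2 x.1 a) θ * QU θ x.1 x.2 a
        + π θ x.2 x.1 a * (γ * ∑ s', P x.1 a s' * ((1 - β x.2 s') * d (s', x.2)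
          + β x.2 s' * ∑ ω', πI s' ω' * d (s', ω')))) := (hQΩ' x).deriv
    rw [h1, Finset.sum_add_distrib]
    congr 1
    rw [hkey θ d x.1 x.2, Finset.mul_sum]
    congr 1; ext a
    ring
  -- M *ᵥ d = g
  have hMvd : (1 - γ • P₁ θ) *ᵥ d = g := by
    funext x
    rw [Matrix.sub_mulVec, Matrix.one_mulVec]
    have h2 : (γ • P₁ θ) *ᵥ d = γ • (P₁ θ *ᵥ d) := Matrix.smul_mulVec γ _ _
    rw [h2]
    have hmv : (P₁ θ *ᵥ d) x = ∑ y : S × Ω, P₁ θ x y * d y := by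
      simp [Matrix.mulVec, dotProduct]
    simp only [Pi.sub_apply, Pi.smul_apply, smul_eq_mul, hmv]
    have := hd_bell x
    linarith
  have hNM : Matrix.of (fun x y => ∑' t : ℕ, γ ^ t * (P₁ θ ^ t) x y) * (1 - γ • P₁ θ)
      = 1 := mul_eq_one_comm.mp (hMN θ)
  have hfinal : d = Matrix.of (fun x y => ∑' t : ℕ, γ ^ t * (P₁ θ ^ t) x y) *ᵥ g := by
    have h1 : Matrix.of (fun x y => ∑' t : ℕ, γ ^ t * (P₁ θ ^ t) x y) *ᵥ
        ((1 - γ • P₁ θ) *ᵥ d) = d := by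
      rw [Matrix.mulVec_mulVec, hNM, Matrix.one_mulVec]
    rw [hMvd] at h1
    exact h1.symm
  calc deriv (fun θ' => QΩ θ' s ω) θ = d (s, ω) := rfl
    _ = ∑ x : S × Ω, (∑' t : ℕ, γ ^ t * (P₁ θ ^ t) (s, ω) x) * g x := by
        rw [hfinal]; simp [Matrix.mulVec, dotProduct]
    _ = ∑ x : S × Ω, (∑' t : ℕ, γ ^ t * (P₁ θ ^ t) (s, ω) x) *
          ∑ a, deriv (fun θ' => π θ' x.2 x.1 a) θ * QU θ x.1 x.2 a := rfl
end

section
/- (Termination gradient under the interest policy over options.) Consider a finite MDP with options with a fixed interest policy over options π_I, in which the termination functions are parameterized: for each option ω, β_{ω,ν} : ℝ × S → [0,1] with ν ↦ β_{ω,ν}(s) differentiable for every s; write Q_Ω^ν for the corresponding option-value function over options, V_Ω^ν(s) = Σ_ω π_I(ω|s) Q_Ω^ν(s,ω) for the value over options, A_Ω^ν(s,ω) = Q_Ω^ν(s,ω) − V_Ω^ν(s) for the advantage, P₁^ν((s',ω')|(s,ω)) = Σ_a π_ω(a|s) P(s'|s,a) [ (1−β_{ω,ν}(s')) 1{ω'=ω}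 + β_{ω,ν}(s') π_I(ω'|s') ] for the augmented transition kernel over state-option pairs, and μ̂^ν((s̃,ω̃)|(s,ω)) = Σ_{t=0}^∞ γ^t (P₁^ν)^t((s̃,ω̃)|(s,ω)) for the discounted weighting of state-option pairs along trajectories starting from (s,ω). Then the gradient of the expected discounted return with respect to ν at (s,ω) is: ∂Q_Ω^ν(s,ω)/∂ν = − Σ_{(s̃,ω̃)} μ̂^ν((s̃,ω̃)|(s,ω)) · γ Σ_a π_{ω̃}(a|s̃) Σ_{s'} P(s'|s̃,a) (∂β_{ω̃,ν}(s')/∂ν) A_Ω^ν(s',ω̃). -/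
attribute [local instance] Matrix.linftyOpNormedAddCommGroup Matrix.linftyOpNormedRing
  Matrix.linftyOpNormedAlgebra Matrix.linftyOpNormedSpace

/-- **termination gradient under the interest policy over options.**
With a fixed interest policy over options `πI` and termination functions parameterized by
`ν`, the gradient of the expected discounted return with respect to `ν` at `(s,ω)` is
`− Σ_{(s̃,ω̃)} μ̂^ν((s̃,ω̃)|(s,ω)) · γ Σ_a π_ω̃(a|s̃) Σ_{s'} P(s'|s̃,a)
  (∂β_{ω̃,ν}(s')/∂ν) A_Ω^ν(s',ω̃)`, where `A_Ω^ν(s,ω) = Q_Ω^ν(s,ω) − V_Ω^ν(s)` and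
`V_Ω^ν(s) = Σ_ω π_I(ω|s) Q_Ω^ν(s,ω)`. -/
theorem termination_gradient_under_interest_policy
    {S A Ω : Type*} [Fintype S] [Fintype A] [Fintype Ω]
    [DecidableEq S] [DecidableEq A] [DecidableEq Ω]
    [Nonempty S] [Nonempty A] [Nonempty Ω]
    (r : S → A → ℝ) (P : S → A → S → ℝ)
    (hP0 : ∀ s a s', 0 ≤ P s a s') (hP1 : ∀ s a, ∑ s', P s a s' = 1)
    (γ : ℝ) (hγ0 : 0 ≤ γ) (hγ1 : γ < 1)
    (π : Ω → S → A → ℝ)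
    (hπ0 : ∀ ω s a, 0 ≤ π ω s a) (hπ1 : ∀ ω s, ∑ a, π ω s a = 1)
    (β : ℝ → Ω → S → ℝ)
    (hβdiff : ∀ ω s, Differentiable ℝ (fun ν => β ν ω s))
    (hβ0 : ∀ ν ω s, 0 ≤ β ν ω s) (hβ1 : ∀ ν ω s, β ν ω s ≤ 1)
    (πΩ : S → Ω → ℝ)
    (hπΩ0 : ∀ s ω, 0 ≤ πΩ s ω) (hπΩ1 : ∀ s, ∑ ω, πΩ s ω = 1)
    (I : S → Ω → ℝ) (hI0 : ∀ s ω, 0 ≤ I s ω)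
    (hIpos : ∀ s, 0 < ∑ ω, I s ω * πΩ s ω)
    (πI : S → Ω → ℝ)
    (hπI : ∀ s ω, πI s ω = I s ω * πΩ s ω / ∑ ω', I s ω' * πΩ s ω')
    (QU : ℝ → S → Ω → A → ℝ) (QΩ : ℝ → S → Ω → ℝ)
    (hQΩ : ∀ ν s ω, QΩ ν s ω = ∑ a, π ω s a * QU ν s ω a)
    (hQU : ∀ ν s ω a, QU ν s ω a = r s a + γ * ∑ s', P s a s' *
      ((1 - β ν ω s') * QΩ ν s' ω + β ν ω s' * ∑ ω', πI s' ω' * QΩ ν s' ω'))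
    (VΩ : ℝ → S → ℝ)
    (hVΩ : ∀ ν s, VΩ ν s = ∑ ω, πI s ω * QΩ ν s ω)
    (P₁ : ℝ → Matrix (S × Ω) (S × Ω) ℝ)
    (hP₁ : ∀ ν s ω s' ω', P₁ ν (s, ω) (s', ω') =
      ∑ a, π ω s a * P s a s' *
        ((1 - β ν ω s') * (if ω' = ω then 1 else 0) + β ν ω s' * πI s' ω')) :
    ∀ ν s ω,
      deriv (fun ν => QΩ ν s ω) ν =
        - ∑ x : S × Ω, (∑' t : ℕ, γ ^ t * (P₁ ν ^ t) (s, ω) x) *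
          (γ * ∑ a, π x.2 x.1 a * ∑ s', P x.1 a s' *
            (deriv (fun ν => β ν x.2 s') ν * (QΩ ν s' x.2 - VΩ ν s'))) := by
  intro ν s ω
  classical
  -- basic facts about πI
  have hπIs : ∀ s', ∑ ω', πI s' ω' = 1 := by
    intro s'
    simp only [hπI]
    rw [← Finset.sum_div, div_self (hIpos s').ne']
  have hπI0 : ∀ s' ω', 0 ≤ πI s' ω' := fun s' ω' => by
    rw [hπI]; exact div_nonneg (mul_nonneg (hI0 _ _) (hπΩ0 _ _)) (hIpos s').le
  -- P₁ is a (sub)stochastic matrix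
  have hP₁nn : ∀ ν' (x y : S × Ω), 0 ≤ P₁ ν' x y := by
    rintro ν' ⟨s1, ω1⟩ ⟨s2, ω2⟩
    rw [hP₁]
    refine Finset.sum_nonneg fun a _ => mul_nonneg (mul_nonneg (hπ0 _ _ _) (hP0 _ _ _)) ?_
    have h1 : (0:ℝ) ≤ 1 - β ν' ω1 s2 := by linarith [hβ1 ν' ω1 s2]
    refine add_nonneg (mul_nonneg h1 ?_) (mul_nonneg (hβ0 _ _ _) (hπI0 _ _))
    split <;> norm_num
  have hP₁row : ∀ ν' (x : S × Ω), ∑ y, P₁ ν' x y = 1 := by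
    rintro ν' ⟨s1, ω1⟩
    rw [Fintype.sum_prod_type]
    have hinner : ∀ s2, ∑ ω2, P₁ ν' (s1, ω1) (s2, ω2) = ∑ a, π ω1 s1 a * P s1 a s2 := by
      intro s2
      simp only [hP₁]
      rw [Finset.sum_comm]
      refine Finset.sum_congr rfl fun a _ => ?_
      rw [← Finset.mul_sum]
      have : ∑ ω2, ((1 - β ν' ω1 s2) * (if ω2 = ω1 then 1 else 0)
          + β ν' ω1 s2 * πI s2 ω2) = 1 := by
        rw [Finset.sum_add_distrib, ← Finset.mul_sum, ← Finset.mul_sum, hπIs]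
        simp [Finset.sum_ite_eq']
      rw [this, mul_one]
    rw [Finset.sum_congr rfl fun s2 _ => hinner s2, Finset.sum_comm]
    simp only [← Finset.mul_sum, hP1, mul_one, hπ1]
  -- norm bound
  have hnorm : ∀ ν', ‖γ • P₁ ν'‖ < 1 := by
    intro ν'
    have hPn : ‖P₁ ν'‖ ≤ 1 := by
      rw [Matrix.linfty_opNorm_def]
      have hone : ∀ i : S × Ω, ∑ j, ‖P₁ ν' i j‖₊ = 1 := by
        intro i
        have h := hP₁row ν' i
        rw [← NNReal.coe_inj]
        push_cast
        simp only [coe_nnnorm, Real.norm_eq_abs]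
        rw [← h]
        exact Finset.sum_congr rfl fun j _ => abs_of_nonneg (hP₁nn ν' i j)
      simp only [hone]
      rw [Finset.sup_const Finset.univ_nonempty]
      norm_num
    calc ‖γ • P₁ ν'‖ = |γ| * ‖P₁ ν'‖ := by rw [norm_smul, Real.norm_eq_abs]
    _ ≤ γ * 1 := by rw [abs_of_nonneg hγ0]; exact mul_le_mul_of_nonneg_left hPn hγ0
    _ < 1 := by linarith
  -- Bellman equation in vector form
  set Rb : (S × Ω) → ℝ := fun x => ∑ a, π x.2 x.1 a * r x.1 a with hRb
  set Qv : ℝ → (S × Ω) → ℝ := fun ν' x => QΩ ν' x.1 x.2 with hQv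
  have hBell : ∀ ν' (x : S × Ω), Qv ν' x = Rb x + γ * ∑ y, P₁ ν' x y * Qv ν' y := by
    rintro ν' ⟨s1, ω1⟩
    have hrhs : ∑ y, P₁ ν' (s1, ω1) y * Qv ν' y
        = ∑ a, π ω1 s1 a * ∑ s2, P s1 a s2 * ((1 - β ν' ω1 s2) * QΩ ν' s2 ω1
            + β ν' ω1 s2 * ∑ ω2, πI s2 ω2 * QΩ ν' s2 ω2) := by
      rw [Fintype.sum_prod_type]
      have hs2 : ∀ s2, ∑ ω2, P₁ ν' (s1, ω1) (s2, ω2) * Qv ν' (s2, ω2)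
          = ∑ a, π ω1 s1 a * (P s1 a s2 * ((1 - β ν' ω1 s2) * QΩ ν' s2 ω1
              + β ν' ω1 s2 * ∑ ω2, πI s2 ω2 * QΩ ν' s2 ω2)) := by
        intro s2
        simp only [hP₁, hQv, Finset.sum_mul]
        rw [Finset.sum_comm]
        refine Finset.sum_congr rfl fun a _ => ?_
        have step1 : ∀ ω2 : Ω, π ω1 s1 a * P s1 a s2 *
              ((1 - β ν' ω1 s2) * (if ω2 = ω1 then 1 else 0) + β ν' ω1 s2 * πI s2 ω2)
              * QΩ ν' s2 ω2
            = (1 - β ν' ω1 s2) * (π ω1 s1 a * P s1 a s2) *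
                ((if ω2 = ω1 then 1 else 0) * QΩ ν' s2 ω2)
              + β ν' ω1 s2 * (π ω1 s1 a * P s1 a s2) * (πI s2 ω2 * QΩ ν' s2 ω2) := by
          intro ω2; ring
        rw [Finset.sum_congr rfl fun ω2 _ => step1 ω2, Finset.sum_add_distrib,
          ← Finset.mul_sum, ← Finset.mul_sum]
        have hite : ∑ ω2, (if ω2 = ω1 then (1:ℝ) else 0) * QΩ ν' s2 ω2 = QΩ ν' s2 ω1 := by
          simp [ite_mul]
        rw [hite]
        ring
      rw [Finset.sum_congr rfl fun s2 _ => hs2 s2, Finset.sum_comm]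
      exact Finset.sum_congr rfl fun a _ => (Finset.mul_sum _ _ _).symm
    rw [hrhs]
    simp only [hQv, hRb]
    rw [hQΩ, Finset.sum_congr rfl fun a (_ : a ∈ Finset.univ) =>
      congrArg (fun z => π ω1 s1 a * z) (hQU ν' s1 ω1 a)]
    rw [Finset.mul_sum, ← Finset.sum_add_distrib]
    exact Finset.sum_congr rfl fun a _ => by ring
  -- matrix form and solution via Neumann series
  have hMul : ∀ ν', ((1 : Matrix (S × Ω) (S × Ω) ℝ) - γ • P₁ ν').mulVec (Qv ν') = Rb := by
    intro ν'
    funext x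
    have hb := hBell ν' x
    simp only [Matrix.sub_mulVec, Matrix.one_mulVec, Matrix.smul_mulVec,
      Pi.sub_apply, Pi.smul_apply, smul_eq_mul]
    have hmv : (P₁ ν').mulVec (Qv ν') x = ∑ y, P₁ ν' x y * Qv ν' y := by
      simp [Matrix.mulVec, dotProduct]
    rw [hmv]
    linarith [hb]
  set u : ℝ → (Matrix (S × Ω) (S × Ω) ℝ)ˣ := fun ν' => Units.oneSub (γ • P₁ ν') (hnorm ν')
    with hu
  have huval : ∀ ν', (u ν' : Matrix (S × Ω) (S × Ω) ℝ) = 1 - γ • P₁ ν' := fun _ => rfl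
  have hQsolve : ∀ ν', Qv ν' = ((u ν')⁻¹ : (Matrix (S × Ω) (S × Ω) ℝ)ˣ).1.mulVec Rb := by
    intro ν'
    calc Qv ν' = (1 : Matrix (S × Ω) (S × Ω) ℝ).mulVec (Qv ν') := (Matrix.one_mulVec _).symm
    _ = (((u ν')⁻¹ : (Matrix (S × Ω) (S × Ω) ℝ)ˣ).1 * (u ν' : Matrix (S × Ω) (S × Ω) ℝ)).mulVec
        (Qv ν') := by rw [Units.inv_mul]
    _ = ((u ν')⁻¹ : (Matrix (S × Ω) (S × Ω) ℝ)ˣ).1.mulVec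
        ((u ν' : Matrix (S × Ω) (S × Ω) ℝ).mulVec (Qv ν')) := (Matrix.mulVec_mulVec _ _ _).symm
    _ = _ := by rw [huval, hMul]
  have hGinv : ∀ ν', ((u ν')⁻¹ : (Matrix (S × Ω) (S × Ω) ℝ)ˣ).1
      = Ring.inverse ((1 : Matrix (S × Ω) (S × Ω) ℝ) - γ • P₁ ν') :=
    fun ν' => (NormedRing.inverse_one_sub _ (hnorm ν')).symm
  -- decomposition of P₁ and its derivative
  set C : Matrix (S × Ω) (S × Ω) ℝ := Matrix.of fun x y =>
    ∑ a, π x.2 x.1 a * P x.1 a y.1 * (if y.2 = x.2 then 1 else 0) with hC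
  set E : Ω × S → Matrix (S × Ω) (S × Ω) ℝ := fun p => Matrix.of fun x y =>
    if y.1 = p.2 ∧ x.2 = p.1 then
      (∑ a, π x.2 x.1 a * P x.1 a y.1) * (πI y.1 y.2 - if y.2 = x.2 then 1 else 0) else 0
    with hE
  have hdecomp : ∀ ν', P₁ ν' = C + ∑ p : Ω × S, β ν' p.1 p.2 • E p := by
    intro ν'
    ext ⟨s1, ω1⟩ ⟨s2, ω2⟩
    rw [hP₁]
    have hsum : ∑ p : Ω × S, (β ν' p.1 p.2 • E p) (s1, ω1) (s2, ω2)
        = β ν' ω1 s2 * ((∑ a, π ω1 s1 a * P s1 a s2) *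
            (πI s2 ω2 - if ω2 = ω1 then 1 else 0)) := by
      rw [Finset.sum_eq_single ((ω1, s2) : Ω × S)]
      · simp [hE]
      · rintro ⟨p1, p2⟩ _ hne
        simp only [hE, Matrix.smul_apply, Matrix.of_apply, smul_eq_mul]
        rw [if_neg, mul_zero]
        rintro ⟨h1, h2⟩
        exact hne (by rw [← h1, ← h2])
      · intro h; exact absurd (Finset.mem_univ _) h
    simp only [Matrix.add_apply, Matrix.sum_apply]
    rw [hsum]
    simp only [hC, Matrix.of_apply]
    rw [← Finset.sum_mul, ← Finset.sum_mul]
    ring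
  set E' : Matrix (S × Ω) (S × Ω) ℝ :=
    ∑ p : Ω × S, deriv (fun ν' => β ν' p.1 p.2) ν • E p with hE'
  have hP₁d : HasDerivAt (fun ν' => P₁ ν') E' ν := by
    rw [funext hdecomp, hE']
    refine HasDerivAt.const_add _ (HasDerivAt.fun_sum fun p _ => ?_)
    exact ((hβdiff p.1 p.2).differentiableAt.hasDerivAt).smul_const (E p)
  have hM : HasDerivAt (fun ν' => (1 : Matrix (S × Ω) (S × Ω) ℝ) - γ • P₁ ν') (-(γ • E')) ν := by
    have h := (hasDerivAt_const ν (1 : Matrix (S × Ω) (S × Ω) ℝ)).fun_sub (hP₁d.fun_const_smul γ)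
    simp only [sub_zero, zero_sub] at h
    exact h
  set Gm : Matrix (S × Ω) (S × Ω) ℝ := ((u ν)⁻¹ : (Matrix (S × Ω) (S × Ω) ℝ)ˣ).1 with hGm
  have hGd : HasDerivAt (fun ν' => Ring.inverse ((1 : Matrix (S × Ω) (S × Ω) ℝ) - γ • P₁ ν'))
      (γ • (Gm * E' * Gm)) ν := by
    have h := (hasFDerivAt_ringInverse (𝕜 := ℝ) (u ν)).comp_hasDerivAt ν hM
    simp only [ContinuousLinearMap.neg_apply, ContinuousLinearMap.mulLeftRight_apply] at h
    refine HasDerivAt.congr_deriv h ?_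
    rw [← hGm, mul_neg, neg_mul, neg_neg, mul_smul_comm, smul_mul_assoc]
  have hQd : ∀ x : S × Ω, HasDerivAt (fun ν' => Qv ν' x)
      (∑ y, (γ • (Gm * E' * Gm)) x y * Rb y) ν := by
    intro x
    have hfun : (fun ν' => Qv ν' x) = fun ν' =>
        ∑ y, Ring.inverse ((1 : Matrix (S × Ω) (S × Ω) ℝ) - γ • P₁ ν') x y * Rb y := by
      funext ν'
      rw [hQsolve ν', hGinv ν']
      simp [Matrix.mulVec, dotProduct]
    rw [hfun]
    refine HasDerivAt.fun_sum fun y _ => HasDerivAt.mul_const ?_ (Rb y)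
    let L : Matrix (S × Ω) (S × Ω) ℝ →ₗ[ℝ] ℝ :=
      { toFun := fun M => M x y, map_add' := fun _ _ => rfl, map_smul' := fun _ _ => rfl }
    have h := (LinearMap.toContinuousLinearMap L).hasFDerivAt.comp_hasDerivAt ν hGd
    exact h
  -- identification of Gm entries with the discounted weighting
  have hGmE : ∀ x : S × Ω, Gm (s, ω) x = ∑' t : ℕ, γ ^ t * (P₁ ν ^ t) (s, ω) x := by
    intro x
    have hsum : Summable (fun t : ℕ => (γ • P₁ ν) ^ t) :=
      summable_geometric_of_norm_lt_one (hnorm ν)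
    have h1 : Gm = ∑' t : ℕ, (γ • P₁ ν) ^ t := rfl
    rw [h1]
    erw [tsum_apply hsum, tsum_apply (Pi.summable.mp hsum (s, ω))]
    refine tsum_congr fun t => ?_
    rw [smul_pow]
    simp
  -- entries of E'
  have hE'entry : ∀ (s1 : S) (ω1 : Ω) (y : S × Ω), E' (s1, ω1) y
      = deriv (fun ν' => β ν' ω1 y.1) ν *
          ((∑ a, π ω1 s1 a * P s1 a y.1) * (πI y.1 y.2 - if y.2 = ω1 then 1 else 0)) := by
    rintro s1 ω1 ⟨s2, ω2⟩
    rw [hE', Matrix.sum_apply]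
    rw [Finset.sum_eq_single ((ω1, s2) : Ω × S)]
    · simp [hE]
    · rintro ⟨p1, p2⟩ _ hne
      simp only [hE, Matrix.smul_apply, Matrix.of_apply, smul_eq_mul]
      rw [if_neg, mul_zero]
      rintro ⟨h1, h2⟩
      exact hne (by rw [← h1, ← h2])
    · intro h; exact absurd (Finset.mem_univ _) h
  -- the key advantage formula
  have hEQ : ∀ x : S × Ω, ∑ y, E' x y * Qv ν y
      = -(∑ a, π x.2 x.1 a * ∑ s', P x.1 a s' *
          (deriv (fun ν' => β ν' x.2 s') ν * (QΩ ν s' x.2 - VΩ ν s'))) := by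
    rintro ⟨s1, ω1⟩
    rw [Fintype.sum_prod_type]
    have hs2 : ∀ s2, ∑ ω2, E' (s1, ω1) (s2, ω2) * Qv ν (s2, ω2)
        = deriv (fun ν' => β ν' ω1 s2) ν *
            ((∑ a, π ω1 s1 a * P s1 a s2) * (VΩ ν s2 - QΩ ν s2 ω1)) := by
      intro s2
      rw [Finset.sum_congr rfl fun ω2 (_ : ω2 ∈ Finset.univ) => by
        rw [hE'entry s1 ω1 (s2, ω2)]]
      have step : ∀ ω2 : Ω, deriv (fun ν' => β ν' ω1 s2) ν *
            ((∑ a, π ω1 s1 a * P s1 a s2) * (πI s2 ω2 - if ω2 = ω1 then 1 else 0))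
              * Qv ν (s2, ω2)
          = deriv (fun ν' => β ν' ω1 s2) ν * (∑ a, π ω1 s1 a * P s1 a s2)
              * (πI s2 ω2 * QΩ ν s2 ω2)
            - deriv (fun ν' => β ν' ω1 s2) ν * (∑ a, π ω1 s1 a * P s1 a s2)
              * ((if ω2 = ω1 then 1 else 0) * QΩ ν s2 ω2) := by
        intro ω2
        show _ * _ * QΩ ν s2 ω2 = _
        ring
      rw [Finset.sum_congr rfl fun ω2 (_ : ω2 ∈ Finset.univ) => step ω2,
        Finset.sum_sub_distrib, ← Finset.mul_sum, ← Finset.mul_sum, ← hVΩ]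
      have hite : ∑ ω2, (if ω2 = ω1 then (1:ℝ) else 0) * QΩ ν s2 ω2 = QΩ ν s2 ω1 := by
        simp [ite_mul]
      rw [hite]
      ring
    rw [Finset.sum_congr rfl fun s2 (_ : s2 ∈ Finset.univ) => hs2 s2]
    simp only [Finset.mul_sum]
    rw [Finset.sum_comm, ← Finset.sum_neg_distrib]
    refine Finset.sum_congr rfl fun s2 _ => ?_
    have step2 : ∀ a : A, π ω1 s1 a * (P s1 a s2 *
          (deriv (fun ν' => β ν' ω1 s2) ν * (QΩ ν s2 ω1 - VΩ ν s2)))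
        = π ω1 s1 a * P s1 a s2 *
          (deriv (fun ν' => β ν' ω1 s2) ν * (QΩ ν s2 ω1 - VΩ ν s2)) := fun a => by ring
    simp only [step2]
    rw [← Finset.sum_mul]
    ring
  -- assemble everything
  have hderiv : deriv (fun ν' => QΩ ν' s ω) ν
      = ∑ y, (γ • (Gm * E' * Gm)) (s, ω) y * Rb y := (hQd (s, ω)).deriv
  have hQvRb : Gm.mulVec Rb = Qv ν := (hQsolve ν).symm
  have hmain : ∑ y, (γ • (Gm * E' * Gm)) (s, ω) y * Rb y
      = ∑ x : S × Ω, Gm (s, ω) x * (γ * ∑ y, E' x y * Qv ν y) := by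
    have h2 : (Gm * E' * Gm).mulVec Rb = Gm.mulVec (E'.mulVec (Qv ν)) := by
      rw [← Matrix.mulVec_mulVec, ← Matrix.mulVec_mulVec, hQvRb]
    have h3 : ∑ y, (Gm * E' * Gm) (s, ω) y * Rb y
        = ∑ x : S × Ω, Gm (s, ω) x * ∑ y, E' x y * Qv ν y := by
      have := congrFun h2 (s, ω)
      simpa [Matrix.mulVec, dotProduct] using this
    calc ∑ y, (γ • (Gm * E' * Gm)) (s, ω) y * Rb y
        = ∑ y, γ * ((Gm * E' * Gm) (s, ω) y * Rb y) :=
          Finset.sum_congr rfl fun y _ => by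
            simp only [Matrix.smul_apply, smul_eq_mul]; ring
    _ = γ * ∑ y, (Gm * E' * Gm) (s, ω) y * Rb y := (Finset.mul_sum _ _ _).symm
    _ = γ * ∑ x : S × Ω, Gm (s, ω) x * ∑ y, E' x y * Qv ν y := by rw [h3]
    _ = ∑ x : S × Ω, γ * (Gm (s, ω) x * ∑ y, E' x y * Qv ν y) := Finset.mul_sum _ _ _
    _ = _ := Finset.sum_congr rfl fun x _ => by ring
  rw [hderiv, hmain, ← Finset.sum_neg_distrib]
  refine Finset.sum_congr rfl fun x _ => ?_
  rw [hGmE x, hEQ x]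
  ring
end
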